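/- arXiv:1407.1845 — 3 statements merged into one kernel-verified Lean document; each statement's English description precedes it below -/
import Mathlib

section
/- Let $p$ be a prime, $d \geq 1$, and let $P_{p^d} \leq \mathfrak{S}_{p^d}$ denote the iterated wreath product Sylow $p$-subgroup of $\mathfrak{S}_{p^d}$. Let $P \leq P_{p^d}$ be a subgroup such that (i) $P$ contains a subgroup $R$ that is $\mathfrak{S}_{p^d}$-conjugate to $P_{p^{d-1}}$, and (ii) $P$ contains an elementary abelian subgroup $E$ of order $p^d$ acting regularly on $\{1,\ldots,p^d\}$. Then $P = P_{p^d}$. -/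
lemma cycBound {p d j x : ℕ} (h1 : x < p ^ j) (h2 : j ≤ d) (h3 : 1 ≤ j) (a : ℕ) :
    (x + a) % p ^ j < p ^ d := by
  have h0 : 0 < p ^ j := Nat.pos_of_ne_zero (by omega)
  have hpp : 0 < p := by
    rcases Nat.eq_zero_or_pos p with h | h
    · subst h; rw [Nat.zero_pow (by omega : 0 < j)] at h0; omega
    · exact h
  exact lt_of_lt_of_le (Nat.mod_lt _ h0) (Nat.pow_le_pow_right hpp h2)

/-- The generator `g_j` of the iterated wreath product Sylow `p`-subgroup of `𝔖_{p^d}`: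
the product of the `p^{j-1}` disjoint `p`-cycles
`(k, k+p^{j-1}, …, k+(p-1)p^{j-1})`, `1 ≤ k ≤ p^{j-1}` (here written `0`-indexed:
`x ↦ (x + p^{j-1}) mod p^j` on `{0, …, p^j - 1}`, fixing all other points). -/
def cycPerm (p d j : ℕ) : Equiv.Perm (Fin (p ^ d)) where
  toFun x :=
    if h : (x : ℕ) < p ^ j ∧ j ≤ d ∧ 1 ≤ j then
      ⟨((x : ℕ) + p ^ (j - 1)) % p ^ j, cycBound h.1 h.2.1 h.2.2 _⟩
    else x
  invFun x :=
    if h : (x : ℕ) < p ^ j ∧ j ≤ d ∧ 1 ≤ j then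
      ⟨((x : ℕ) + (p ^ j - p ^ (j - 1))) % p ^ j, cycBound h.1 h.2.1 h.2.2 _⟩
    else x
  left_inv := by
    intro x
    by_cases h : (x : ℕ) < p ^ j ∧ j ≤ d ∧ 1 ≤ j
    · have h0 : 0 < p ^ j := Nat.pos_of_ne_zero (by omega)
      have hle : p ^ (j - 1) ≤ p ^ j := by
        have hpp : 0 < p := by
          rcases Nat.eq_zero_or_pos p with hz | hz
          · subst hz; rw [Nat.zero_pow (by omega : 0 < j)] at h0; omega
          · exact hz
        exact Nat.pow_le_pow_right hpp (by omega)
      simp only [dif_pos h]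
      have h1 : ((x : ℕ) + p ^ (j - 1)) % p ^ j < p ^ j := Nat.mod_lt _ h0
      rw [dif_pos ⟨h1, h.2⟩]
      apply Fin.ext
      simp only [Fin.val_mk]
      rw [Nat.mod_add_mod]
      have : (x : ℕ) + p ^ (j - 1) + (p ^ j - p ^ (j - 1)) = (x : ℕ) + p ^ j := by omega
      rw [this, Nat.add_mod_right, Nat.mod_eq_of_lt h.1]
    · simp only [dif_neg h]
  right_inv := by
    intro x
    by_cases h : (x : ℕ) < p ^ j ∧ j ≤ d ∧ 1 ≤ j
    · have h0 : 0 < p ^ j := Nat.pos_of_ne_zero (by omega)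
      have hle : p ^ (j - 1) ≤ p ^ j := by
        have hpp : 0 < p := by
          rcases Nat.eq_zero_or_pos p with hz | hz
          · subst hz; rw [Nat.zero_pow (by omega : 0 < j)] at h0; omega
          · exact hz
        exact Nat.pow_le_pow_right hpp (by omega)
      simp only [dif_pos h]
      have h1 : ((x : ℕ) + (p ^ j - p ^ (j - 1))) % p ^ j < p ^ j := Nat.mod_lt _ h0
      rw [dif_pos ⟨h1, h.2⟩]
      apply Fin.ext
      simp only [Fin.val_mk]
      rw [Nat.mod_add_mod]
      have : (x : ℕ) + (p ^ j - p ^ (j - 1)) + p ^ (j - 1) = (x : ℕ) + p ^ j := by omega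
      rw [this, Nat.add_mod_right, Nat.mod_eq_of_lt h.1]
    · simp only [dif_neg h]

/-- `Pgrp p d k` is the subgroup of `𝔖_{p^d}` generated by `g_1, …, g_k`.
For `k = d` this is the Sylow `p`-subgroup `P_{p^d}`; for `k = d - 1` it is the
standard copy of `P_{p^{d-1}}` supported on the first `p^{d-1}` points. -/
def Pgrp (p d k : ℕ) : Subgroup (Equiv.Perm (Fin (p ^ d))) :=
  Subgroup.closure ((fun j => cycPerm p d j) '' (Set.Icc 1 k))

-- ===================== auxiliary development =====================

theorem Equiv.Perm.inv_apply_self {α : Type*} (f : Equiv.Perm α) (x : α) : f⁻¹ (f x) = x :=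
  f.symm_apply_apply x

theorem Equiv.Perm.apply_inv_self {α : Type*} (f : Equiv.Perm α) (x : α) : f (f⁻¹ x) = x :=
  f.apply_symm_apply x

/-- A permutation of `Fin (p^d)` is *affine* if for every level `j ∈ [1,d]` it maps
level-`j` intervals to level-`j` intervals, rotating the `p` level-`(j-1)` subintervals
cyclically. These are exactly the elements of the iterated wreath product `C_p ≀ ⋯ ≀ C_p`. -/
def aff (p d : ℕ) (g : Equiv.Perm (Fin (p ^ d))) : Prop :=
  ∀ j, 1 ≤ j → j ≤ d → ∀ x y : Fin (p ^ d), (x : ℕ) / p ^ j = (y : ℕ) / p ^ j →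
    ((((g x : Fin (p ^ d)) : ℕ) / p ^ (j - 1) : ℕ) : ZMod p) -
      ((((g y : Fin (p ^ d)) : ℕ) / p ^ (j - 1) : ℕ) : ZMod p)
      = (((x : ℕ) / p ^ (j - 1) : ℕ) : ZMod p) - (((y : ℕ) / p ^ (j - 1) : ℕ) : ZMod p)

lemma aff_one (p d : ℕ) : aff p d 1 := by
  intro j _ _ x y h
  simp only [Equiv.Perm.one_apply]

lemma natcast_zmod_eq {p a b : ℕ} (h : (a : ZMod p) = (b : ZMod p)) :
    a % p = b % p := (ZMod.natCast_eq_natCast_iff a b p).mp h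

lemma aff_div_eq {p d : ℕ} {g : Equiv.Perm (Fin (p ^ d))} (hg : aff p d g) :
    ∀ m j, j + m = d → ∀ x y : Fin (p ^ d), (x : ℕ) / p ^ j = (y : ℕ) / p ^ j →
      ((g x : Fin (p ^ d)) : ℕ) / p ^ j = ((g y : Fin (p ^ d)) : ℕ) / p ^ j := by
  intro m
  induction m with
  | zero =>
    intro j hj x y _
    have hjd : j = d := by omega
    subst hjd
    rw [Nat.div_eq_of_lt (g x).isLt, Nat.div_eq_of_lt (g y).isLt]
  | succ m ih =>
    intro j hj x y hxy
    have hdiv : ∀ z : ℕ, z / p ^ (j + 1) = (z / p ^ j) / p := by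
      intro z; rw [Nat.div_div_eq_div_mul, pow_succ]
    have h1 : (x : ℕ) / p ^ (j + 1) = (y : ℕ) / p ^ (j + 1) := by
      rw [hdiv, hdiv, hxy]
    have h2 := ih (j + 1) (by omega) x y h1
    have h3 := hg (j + 1) (by omega) (by omega) x y h1
    simp only [Nat.add_sub_cancel] at h3
    rw [hxy, sub_self, sub_eq_zero] at h3
    have h4 := natcast_zmod_eq h3
    rw [hdiv, hdiv] at h2
    have e1 := Nat.div_add_mod (((g x : Fin (p ^ d)) : ℕ) / p ^ j) p
    have e2 := Nat.div_add_mod (((g y : Fin (p ^ d)) : ℕ) / p ^ j) p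
    rw [h2, h4] at e1
    omega

lemma aff_div_eq' {p d : ℕ} {g : Equiv.Perm (Fin (p ^ d))} (hg : aff p d g)
    {j : ℕ} (hj : j ≤ d) {x y : Fin (p ^ d)} (h : (x : ℕ) / p ^ j = (y : ℕ) / p ^ j) :
    ((g x : Fin (p ^ d)) : ℕ) / p ^ j = ((g y : Fin (p ^ d)) : ℕ) / p ^ j :=
  aff_div_eq hg (d - j) j (by omega) x y h

lemma aff_mul {p d : ℕ} {g h : Equiv.Perm (Fin (p ^ d))}
    (hg : aff p d g) (hh : aff p d h) : aff p d (g * h) := by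
  intro j hj1 hjd x y hxy
  have h1 := aff_div_eq' hh hjd hxy
  have h2 := hg j hj1 hjd (h x) (h y) h1
  have h3 := hh j hj1 hjd x y hxy
  simp only [Equiv.Perm.mul_apply]
  rw [h2, h3]

lemma aff_pow {p d : ℕ} {g : Equiv.Perm (Fin (p ^ d))} (hg : aff p d g) :
    ∀ m, aff p d (g ^ m) := by
  intro m
  induction m with
  | zero => simpa using aff_one p d
  | succ m ih => rw [pow_succ]; exact aff_mul ih hg

lemma aff_inv {p d : ℕ} {g : Equiv.Perm (Fin (p ^ d))} (hg : aff p d g) :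
    aff p d g⁻¹ := by
  have h1 : g * g ^ (orderOf g - 1) = 1 := by
    rw [← pow_succ']
    have : orderOf g - 1 + 1 = orderOf g := by
      have := orderOf_pos g; omega
    rw [this, pow_orderOf_eq_one]
  rw [inv_eq_of_mul_eq_one_right h1]
  exact aff_pow hg _

lemma zmod_pow_cast_zero {p m : ℕ} (hm : 1 ≤ m) : ((p ^ m : ℕ) : ZMod p) = 0 := by
  have h : m = (m - 1) + 1 := by omega
  rw [h, pow_succ, Nat.cast_mul, ZMod.natCast_self, mul_zero]

lemma add_block_div {p t z : ℕ} (hp : 0 < p) (ht : 0 < t) (hz : z < t * p) :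
    ((z + t) % (t * p)) / t = (z / t + 1) % p := by
  have ha : z / t < p := (Nat.div_lt_iff_lt_mul ht).mpr (by rw [mul_comm p t]; exact hz)
  have hdm : t * (z / t) + z % t = z := Nat.div_add_mod z t
  have hmt : z % t < t := Nat.mod_lt _ ht
  set a := z / t with ha'
  set b := z % t with hb'
  by_cases hcase : a + 1 < p
  · have h1 : z + t = t * (a + 1) + b := by rw [Nat.mul_add, Nat.mul_one]; omega
    have h2 : t * (a + 1) ≤ t * (p - 1) := Nat.mul_le_mul_left t (by omega)
    have h3 : t * (p - 1) + t = t * p := by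
      cases p with
      | zero => omega
      | succ n => simp [Nat.mul_succ]
    have h4 : z + t < t * p := by omega
    rw [Nat.mod_eq_of_lt h4, h1, Nat.mul_add_div ht]
    rw [Nat.div_eq_of_lt hmt, Nat.mod_eq_of_lt hcase]
  · have hap : a + 1 = p := by omega
    have h1 : z + t = b + 1 * (t * p) := by
      have h5 : t * (a + 1) = t * p := by rw [hap]
      have h6 : t * a + t * 1 = t * (a + 1) := by ring
      have h7 : 1 * (t * p) = t * p := by ring
      omega
    have hble : b < t * p := by
      have : t * 1 ≤ t * p := Nat.mul_le_mul_left t (by omega)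
      omega
    rw [h1, Nat.add_mul_mod_self_right, Nat.mod_eq_of_lt hble]
    rw [Nat.div_eq_of_lt hmt, hap, Nat.mod_self]

lemma cyc_apply_lt {p d j : ℕ} (hj1 : 1 ≤ j) (hjd : j ≤ d) (x : Fin (p ^ d))
    (hx : (x : ℕ) < p ^ j) :
    ((cycPerm p d j x : Fin (p ^ d)) : ℕ) = ((x : ℕ) + p ^ (j - 1)) % p ^ j := by
  simp only [cycPerm, Equiv.coe_fn_mk]
  rw [dif_pos ⟨hx, hjd, hj1⟩]

lemma cyc_apply_ge {p d j : ℕ} (x : Fin (p ^ d)) (hx : ¬ (x : ℕ) < p ^ j) :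
    cycPerm p d j x = x := by
  simp only [cycPerm, Equiv.coe_fn_mk]
  rw [dif_neg (by tauto)]

lemma cyc_pow_val {p d j : ℕ} (hj1 : 1 ≤ j) (hjd : j ≤ d) (m : ℕ) (x : Fin (p ^ d))
    (hx : (x : ℕ) < p ^ j) :
    (((cycPerm p d j ^ m) x : Fin (p ^ d)) : ℕ) = ((x : ℕ) + m * p ^ (j - 1)) % p ^ j := by
  induction m generalizing x with
  | zero => simp [Nat.mod_eq_of_lt hx]
  | succ m ih =>
    rw [pow_succ', Equiv.Perm.mul_apply]
    have hmx : (((cycPerm p d j ^ m) x : Fin (p ^ d)) : ℕ) < p ^ j := by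
      rw [ih x hx]
      exact Nat.mod_lt _ (by omega)
    rw [cyc_apply_lt hj1 hjd _ hmx, ih x hx, Nat.mod_add_mod]
    congr 1
    ring

lemma cyc_pow_fix {p d j : ℕ} (m : ℕ) (x : Fin (p ^ d)) (hx : ¬ (x : ℕ) < p ^ j) :
    (cycPerm p d j ^ m) x = x := by
  induction m with
  | zero => simp
  | succ m ih =>
    rw [pow_succ, Equiv.Perm.mul_apply, cyc_apply_ge x hx, ih]

lemma cyc_pow_p {p d j : ℕ} (hp : 0 < p) (hj1 : 1 ≤ j) (hjd : j ≤ d) :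
    cycPerm p d j ^ p = 1 := by
  apply Equiv.ext
  intro x
  by_cases hx : (x : ℕ) < p ^ j
  · apply Fin.ext
    rw [cyc_pow_val hj1 hjd p x hx]
    have h1 : p * p ^ (j - 1) = p ^ j := by
      rw [← pow_succ']
      congr 1
      omega
    rw [h1, Nat.add_mod_right, Nat.mod_eq_of_lt hx, Equiv.Perm.one_apply]
  · rw [cyc_pow_fix p x hx, Equiv.Perm.one_apply]

lemma cyc_aff {p d j : ℕ} (hp : 0 < p) (hj1 : 1 ≤ j) (hjd : j ≤ d) :
    aff p d (cycPerm p d j) := by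
  have hpj : 0 < p ^ j := Nat.pow_pos hp
  have hpj1 : 0 < p ^ (j - 1) := Nat.pow_pos hp
  intro j' hj'1 hj'd x y hxy
  have hpj'1 : 0 < p ^ (j' - 1) := Nat.pow_pos hp
  have key : ∀ z : Fin (p ^ d),
      ((((cycPerm p d j z : Fin (p ^ d)) : ℕ) / p ^ (j' - 1) : ℕ) : ZMod p)
        = (((z : ℕ) / p ^ (j' - 1) : ℕ) : ZMod p)
          + (if (z : ℕ) < p ^ j ∧ j' = j then 1 else 0) := by
    intro z
    by_cases hz : (z : ℕ) < p ^ j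
    · have hv := cyc_apply_lt hj1 hjd z hz
      rcases lt_trichotomy j' j with hlt | heq | hgt
      · rw [if_neg (by omega)]
        have e1 : p ^ (j - 1) = p ^ (j - j') * p ^ (j' - 1) := by
          rw [← pow_add]; congr 1; omega
        have hcast : ((p : ZMod p)) ^ (j - j') = 0 := by
          rw [ZMod.natCast_self, zero_pow (by omega : j - j' ≠ 0)]
        by_cases hw : (z : ℕ) + p ^ (j - 1) < p ^ j
        · rw [hv, Nat.mod_eq_of_lt hw, e1, Nat.add_mul_div_right _ _ hpj'1]
          push_cast
          rw [hcast]
          try ring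
        · have hle : p ^ (j - 1) ≤ p ^ j := Nat.pow_le_pow_right hp (by omega)
          have hmod : ((z : ℕ) + p ^ (j - 1)) % p ^ j = (z : ℕ) + p ^ (j - 1) - p ^ j := by
            rw [Nat.mod_eq_sub_mod (by omega), Nat.mod_eq_of_lt (by omega)]
          have hsub : (p - 1) * p ^ (j - 1) + p ^ (j - 1) = p ^ j := by
            rw [Nat.sub_one_mul]
            have h1 : p ^ (j - 1) * p = p ^ j := by rw [← pow_succ]; congr 1; omega
            have h2 : p ^ (j - 1) ≤ p * p ^ (j - 1) := Nat.le_mul_of_pos_left _ hp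
            rw [mul_comm p (p ^ (j-1))] at h2 ⊢ <;> omega
          have hz_eq : (z : ℕ) = ((z : ℕ) + p ^ (j - 1) - p ^ j)
              + ((p - 1) * p ^ (j - j')) * p ^ (j' - 1) := by
            have h3 : ((p - 1) * p ^ (j - j')) * p ^ (j' - 1) = (p - 1) * p ^ (j - 1) := by
              rw [mul_assoc, ← e1]
            omega
          rw [hv, hmod]
          conv_rhs => rw [hz_eq]
          rw [Nat.add_mul_div_right _ _ hpj'1]
          push_cast
          rw [hcast]
          try ring
      · subst heq
        rw [if_pos ⟨hz, rfl⟩, hv]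
        have hpow : p ^ j' = p ^ (j' - 1) * p := by rw [← pow_succ]; congr 1; omega
        have harith : (((z : ℕ) + p ^ (j' - 1)) % p ^ j') / p ^ (j' - 1)
            = ((z : ℕ) / p ^ (j' - 1) + 1) % p := by
          rw [hpow]
          exact add_block_div hp hpj'1 (by omega)
        rw [harith, ZMod.natCast_mod]
        push_cast
        ring
      · rw [if_neg (by omega)]
        have h1 : ((z : ℕ) + p ^ (j - 1)) % p ^ j < p ^ j := Nat.mod_lt _ hpj
        have hle : p ^ j ≤ p ^ (j' - 1) := Nat.pow_le_pow_right hp (by omega)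
        rw [hv, Nat.div_eq_of_lt (by omega), Nat.div_eq_of_lt (by omega)]
        simp
    · rw [if_neg (by tauto), cyc_apply_ge z hz, add_zero]
  have hxk := key x
  have hyk := key y
  by_cases hcx : (x : ℕ) < p ^ j ∧ j' = j
  · have hcy : (y : ℕ) < p ^ j ∧ j' = j := by
      refine ⟨?_, hcx.2⟩
      have h1 : (x : ℕ) / p ^ j = 0 := Nat.div_eq_of_lt hcx.1
      rw [hcx.2] at hxy
      rw [hxy] at h1
      exact (Nat.div_eq_zero_iff.mp h1).resolve_left (by omega)
    rw [if_pos hcx] at hxk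
    rw [if_pos hcy] at hyk
    rw [hxk, hyk]
    ring
  · have hcy : ¬ ((y : ℕ) < p ^ j ∧ j' = j) := by
      intro hcy
      apply hcx
      refine ⟨?_, hcy.2⟩
      have h1 : (y : ℕ) / p ^ j = 0 := Nat.div_eq_of_lt hcy.1
      rw [hcy.2] at hxy
      rw [← hxy] at h1
      exact (Nat.div_eq_zero_iff.mp h1).resolve_left (by omega)
    rw [if_neg hcx] at hxk
    rw [if_neg hcy] at hyk
    rw [hxk, hyk]
    ring

/-- The subgroup of affine permutations supported on `[0, p^k)`.
For `k ≤ d` this equals `Pgrp p d k` (proved below). -/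
def WS (p d k : ℕ) : Subgroup (Equiv.Perm (Fin (p ^ d))) where
  carrier := {g | aff p d g ∧ ∀ x : Fin (p ^ d), ¬ ((x : ℕ) < p ^ k) → g x = x}
  one_mem' := ⟨aff_one p d, fun _ _ => rfl⟩
  mul_mem' := by
    rintro a b ⟨ha1, ha2⟩ ⟨hb1, hb2⟩
    refine ⟨aff_mul ha1 hb1, fun x hx => ?_⟩
    rw [Equiv.Perm.mul_apply, hb2 x hx, ha2 x hx]
  inv_mem' := by
    rintro a ⟨ha1, ha2⟩
    refine ⟨aff_inv ha1, fun x hx => ?_⟩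
    conv_lhs => rw [← ha2 x hx]
    exact Equiv.Perm.inv_apply_self a x

/-- The subgroup of affine permutations supported on the `i`-th top-level block. -/
def KS (p d i : ℕ) : Subgroup (Equiv.Perm (Fin (p ^ d))) where
  carrier := {g | aff p d g ∧ ∀ x : Fin (p ^ d), (x : ℕ) / p ^ (d - 1) ≠ i → g x = x}
  one_mem' := ⟨aff_one p d, fun _ _ => rfl⟩
  mul_mem' := by
    rintro a b ⟨ha1, ha2⟩ ⟨hb1, hb2⟩
    refine ⟨aff_mul ha1 hb1, fun x hx => ?_⟩
    rw [Equiv.Perm.mul_apply, hb2 x hx, ha2 x hx]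
  inv_mem' := by
    rintro a ⟨ha1, ha2⟩
    refine ⟨aff_inv ha1, fun x hx => ?_⟩
    conv_lhs => rw [← ha2 x hx]
    exact Equiv.Perm.inv_apply_self a x

lemma mem_WS {p d k : ℕ} {g : Equiv.Perm (Fin (p ^ d))} :
    g ∈ WS p d k ↔ aff p d g ∧ ∀ x : Fin (p ^ d), ¬ ((x : ℕ) < p ^ k) → g x = x :=
  Iff.rfl

lemma mem_KS {p d i : ℕ} {g : Equiv.Perm (Fin (p ^ d))} :
    g ∈ KS p d i ↔ aff p d g ∧ ∀ x : Fin (p ^ d), (x : ℕ) / p ^ (d - 1) ≠ i → g x = x :=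
  Iff.rfl

lemma gen_mem_Pgrp {p d k j : ℕ} (hj1 : 1 ≤ j) (hjk : j ≤ k) :
    cycPerm p d j ∈ Pgrp p d k :=
  Subgroup.subset_closure ⟨j, ⟨hj1, hjk⟩, rfl⟩

lemma Pgrp_mono {p d k k' : ℕ} (h : k ≤ k') : Pgrp p d k ≤ Pgrp p d k' :=
  Subgroup.closure_mono (Set.image_mono (Set.Icc_subset_Icc le_rfl h))

lemma Pgrp_le_WS {p d k : ℕ} (hp : 0 < p) (hkd : k ≤ d) : Pgrp p d k ≤ WS p d k := by
  rw [Pgrp, Subgroup.closure_le]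
  rintro _ ⟨j, ⟨hj1, hjk⟩, rfl⟩
  refine ⟨cyc_aff hp hj1 (le_trans hjk hkd), fun x hx => ?_⟩
  refine cyc_apply_ge x (fun h => hx ?_)
  exact lt_of_lt_of_le h (Nat.pow_le_pow_right hp hjk)

/-- A permutation fixing everything outside a set maps the set into itself. -/
lemma fix_out_lt {p d k : ℕ} {g : Equiv.Perm (Fin (p ^ d))}
    (h2 : ∀ x : Fin (p ^ d), ¬ ((x : ℕ) < p ^ k) → g x = x)
    (x : Fin (p ^ d)) (hx : (x : ℕ) < p ^ k) : ((g x : Fin (p ^ d)) : ℕ) < p ^ k := by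
  by_contra hgx
  have h3 : g (g x) = g x := h2 (g x) hgx
  have h4 : g x = x := g.injective h3
  rw [h4] at hgx
  exact hgx hx

lemma Pgrp_trans {p d : ℕ} (hp : 0 < p) {z0 : Fin (p ^ d)} (hz0 : (z0 : ℕ) = 0) :
    ∀ k, k ≤ d → ∀ x : Fin (p ^ d), (x : ℕ) < p ^ k → ∃ g ∈ Pgrp p d k, g z0 = x := by
  intro k
  induction k with
  | zero =>
    intro _ x hx
    refine ⟨1, one_mem _, ?_⟩
    apply Fin.ext
    rw [Equiv.Perm.one_apply, hz0]
    simp only [pow_zero] at hx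
    omega
  | succ k ih =>
    intro hk1 x hx
    have hpk : 0 < p ^ k := Nat.pow_pos hp
    have hr : (x : ℕ) % p ^ k < p ^ k := Nat.mod_lt _ hpk
    have hrd : (x : ℕ) % p ^ k < p ^ d :=
      lt_of_lt_of_le hr (Nat.pow_le_pow_right hp (by omega))
    obtain ⟨g, hg, hgz⟩ := ih (by omega) ⟨(x : ℕ) % p ^ k, hrd⟩ hr
    refine ⟨cycPerm p d (k + 1) ^ ((x : ℕ) / p ^ k) * g, ?_, ?_⟩
    · exact mul_mem (pow_mem (gen_mem_Pgrp (by omega) le_rfl) _)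
        ((Pgrp_mono (by omega)) hg)
    · rw [Equiv.Perm.mul_apply, hgz]
      apply Fin.ext
      have hrk1 : (x : ℕ) % p ^ k < p ^ (k + 1) :=
        lt_of_lt_of_le hr (Nat.pow_le_pow_right hp (by omega))
      rw [cyc_pow_val (by omega) hk1 _ _ hrk1]
      simp only [Nat.add_sub_cancel]
      have hdm := Nat.div_add_mod (x : ℕ) (p ^ k)
      have heq : (x : ℕ) % p ^ k + (x : ℕ) / p ^ k * p ^ k = (x : ℕ) := by
        rw [mul_comm ((x : ℕ) / p ^ k) (p ^ k)]; omega
      rw [heq, Nat.mod_eq_of_lt hx]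

lemma div_pow_div {p a b c : ℕ} (h : b ≤ c) : a / p ^ c = a / p ^ b / p ^ (c - b) := by
  rw [Nat.div_div_eq_div_mul, ← pow_add]
  congr 2
  omega

/-- The permutation acting as `h` on `{x | x/P < m}` and trivially elsewhere. -/
def partPerm {n P : ℕ} (h : Equiv.Perm (Fin n))
    (hpres : ∀ x : Fin n, ((h x : Fin n) : ℕ) / P = (x : ℕ) / P) (m : ℕ) :
    Equiv.Perm (Fin n) where
  toFun x := if (x : ℕ) / P < m then h x else x
  invFun x := if (x : ℕ) / P < m then h⁻¹ x else x
  left_inv := by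
    intro x
    dsimp only
    by_cases hc : (x : ℕ) / P < m
    · rw [if_pos hc]
      have h1 : ((h x : Fin n) : ℕ) / P < m := by rw [hpres x]; exact hc
      rw [if_pos h1, Equiv.Perm.inv_apply_self]
    · rw [if_neg hc, if_neg hc]
  right_inv := by
    intro x
    dsimp only
    by_cases hc : (x : ℕ) / P < m
    · rw [if_pos hc]
      have h0 : ((h⁻¹ x : Fin n) : ℕ) / P = (x : ℕ) / P := by
        conv_rhs => rw [← Equiv.Perm.apply_inv_self h x]
        rw [hpres]
      have h1 : ((h⁻¹ x : Fin n) : ℕ) / P < m := by rw [h0]; exact hc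
      rw [if_pos h1, Equiv.Perm.apply_inv_self]
    · rw [if_neg hc, if_neg hc]

/-- The permutation acting as `h` on `{x | x/P = i}` and trivially elsewhere. -/
def blockPerm {n P : ℕ} (h : Equiv.Perm (Fin n))
    (hpres : ∀ x : Fin n, ((h x : Fin n) : ℕ) / P = (x : ℕ) / P) (i : ℕ) :
    Equiv.Perm (Fin n) where
  toFun x := if (x : ℕ) / P = i then h x else x
  invFun x := if (x : ℕ) / P = i then h⁻¹ x else x
  left_inv := by
    intro x
    dsimp only
    by_cases hc : (x : ℕ) / P = i
    · rw [if_pos hc]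
      have h1 : ((h x : Fin n) : ℕ) / P = i := by rw [hpres x]; exact hc
      rw [if_pos h1, Equiv.Perm.inv_apply_self]
    · rw [if_neg hc, if_neg hc]
  right_inv := by
    intro x
    dsimp only
    by_cases hc : (x : ℕ) / P = i
    · rw [if_pos hc]
      have h0 : ((h⁻¹ x : Fin n) : ℕ) / P = (x : ℕ) / P := by
        conv_rhs => rw [← Equiv.Perm.apply_inv_self h x]
        rw [hpres]
      have h1 : ((h⁻¹ x : Fin n) : ℕ) / P = i := by rw [h0]; exact hc
      rw [if_pos h1, Equiv.Perm.apply_inv_self]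
    · rw [if_neg hc, if_neg hc]

lemma partPerm_apply {n P : ℕ} (h : Equiv.Perm (Fin n))
    (hpres : ∀ x : Fin n, ((h x : Fin n) : ℕ) / P = (x : ℕ) / P) (m : ℕ) (x : Fin n) :
    partPerm h hpres m x = if (x : ℕ) / P < m then h x else x := rfl

lemma blockPerm_apply {n P : ℕ} (h : Equiv.Perm (Fin n))
    (hpres : ∀ x : Fin n, ((h x : Fin n) : ℕ) / P = (x : ℕ) / P) (i : ℕ) (x : Fin n) :
    blockPerm h hpres i x = if (x : ℕ) / P = i then h x else x := rfl

lemma blockPerm_aff {p d l : ℕ} (hp : 0 < p) (hl : l + 1 ≤ d)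
    {h : Equiv.Perm (Fin (p ^ d))} (haff : aff p d h)
    (hpres : ∀ x : Fin (p ^ d), ((h x : Fin (p ^ d)) : ℕ) / p ^ l = (x : ℕ) / p ^ l)
    (i : ℕ) : aff p d (blockPerm h hpres i) := by
  intro j' hj'1 hj'd x y hxy
  by_cases hcase : j' ≤ l
  · -- the level-j' class determines the level-l class
    have hxl : (x : ℕ) / p ^ l = (y : ℕ) / p ^ l := by
      rw [div_pow_div hcase, div_pow_div hcase, hxy]
    by_cases hc : (x : ℕ) / p ^ l = i
    · have hcy : (y : ℕ) / p ^ l = i := by rw [← hxl]; exact hc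
      rw [blockPerm_apply, blockPerm_apply, if_pos hc, if_pos hcy]
      exact haff j' hj'1 hj'd x y hxy
    · have hcy : ¬ (y : ℕ) / p ^ l = i := by rw [← hxl]; exact hc
      rw [blockPerm_apply, blockPerm_apply, if_neg hc, if_neg hcy]
  · -- blockPerm preserves level-(j'-1) indices exactly
    have hkey : ∀ z : Fin (p ^ d),
        ((blockPerm h hpres i z : Fin (p ^ d)) : ℕ) / p ^ (j' - 1) = (z : ℕ) / p ^ (j' - 1) := by
      intro z
      rw [blockPerm_apply]
      by_cases hc : (z : ℕ) / p ^ l = i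
      · rw [if_pos hc, div_pow_div (show l ≤ j' - 1 by omega),
          div_pow_div (show l ≤ j' - 1 by omega) (a := (z : ℕ)), hpres z]
      · rw [if_neg hc]
    rw [hkey x, hkey y]

lemma piece_decomp {p d l : ℕ} (hp : 0 < p) (hl : l + 1 ≤ d)
    {h : Equiv.Perm (Fin (p ^ d))} (haff : aff p d h)
    (hsupp : ∀ x : Fin (p ^ d), ¬ ((x : ℕ) < p ^ (l + 1)) → h x = x)
    (hpres : ∀ x : Fin (p ^ d), ((h x : Fin (p ^ d)) : ℕ) / p ^ l = (x : ℕ) / p ^ l)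
    (M : Subgroup (Equiv.Perm (Fin (p ^ d))))
    (hM : ∀ g : Equiv.Perm (Fin (p ^ d)), aff p d g →
      (∃ i, i < p ∧ ∀ x : Fin (p ^ d), (x : ℕ) / p ^ l ≠ i → g x = x) → g ∈ M) :
    h ∈ M := by
  have hpart : ∀ m, m ≤ p → partPerm h hpres m ∈ M := by
    intro m
    induction m with
    | zero =>
      intro _
      have h1 : partPerm h hpres 0 = 1 := by
        apply Equiv.ext
        intro x
        rw [partPerm_apply, if_neg (Nat.not_lt_zero _), Equiv.Perm.one_apply]
      rw [h1]
      exact one_mem _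
    | succ m ih =>
      intro hm
      have heq : partPerm h hpres (m + 1) = partPerm h hpres m * blockPerm h hpres m := by
        apply Equiv.ext
        intro x
        rcases lt_trichotomy ((x : ℕ) / p ^ l) m with hlt | heqc | hgt
        · have hb : blockPerm h hpres m x = x := by
            rw [blockPerm_apply, if_neg (show ¬ (x : ℕ) / p ^ l = m by omega)]
          rw [Equiv.Perm.mul_apply, hb, partPerm_apply, partPerm_apply, if_pos hlt,
            if_pos (show (x : ℕ) / p ^ l < m + 1 by omega)]
        · have hb : blockPerm h hpres m x = h x := by
            rw [blockPerm_apply, if_pos heqc]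
          have h1 : ((h x : Fin (p ^ d)) : ℕ) / p ^ l = m := by rw [hpres x]; exact heqc
          rw [Equiv.Perm.mul_apply, hb, partPerm_apply, partPerm_apply,
            if_pos (show (x : ℕ) / p ^ l < m + 1 by omega),
            if_neg (show ¬ ((h x : Fin (p ^ d)) : ℕ) / p ^ l < m by omega)]
        · have hb : blockPerm h hpres m x = x := by
            rw [blockPerm_apply, if_neg (show ¬ (x : ℕ) / p ^ l = m by omega)]
          rw [Equiv.Perm.mul_apply, hb, partPerm_apply, partPerm_apply,
            if_neg (show ¬ (x : ℕ) / p ^ l < m + 1 by omega),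
            if_neg (show ¬ (x : ℕ) / p ^ l < m by omega)]
      rw [heq]
      refine mul_mem (ih (by omega)) (hM _ (blockPerm_aff hp hl haff hpres m) ?_)
      exact ⟨m, by omega, fun x hx => by rw [blockPerm_apply, if_neg hx]⟩
  have hfinal : partPerm h hpres p = h := by
    apply Equiv.ext
    intro x
    rw [partPerm_apply]
    by_cases hc : (x : ℕ) / p ^ l < p
    · rw [if_pos hc]
    · rw [if_neg hc]
      refine (hsupp x fun hlt => hc ?_).symm
      rw [pow_succ] at hlt
      exact (Nat.div_lt_iff_lt_mul (Nat.pow_pos hp)).mpr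
        (by rw [mul_comm (p : ℕ) (p ^ l)]; exact hlt)
  rw [← hfinal]
  exact hpart p le_rfl

lemma nat_key {P p B C : ℕ} (hB : B < P) (hp : 0 < p) :
    (C * P + B) % (P * p) = (C % p) * P + B := by
  have h1 : C * P + B = ((C % p) * P + B) + (C / p) * (P * p) := by
    conv_lhs => rw [← Nat.div_add_mod C p]
    ring
  rw [h1, Nat.add_mul_mod_self_right]
  apply Nat.mod_eq_of_lt
  have h2 : C % p < p := Nat.mod_lt _ hp
  calc (C % p) * P + B < (C % p) * P + P := by omega
    _ = (C % p + 1) * P := by ring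
    _ ≤ p * P := Nat.mul_le_mul_right P (by omega)
    _ = P * p := mul_comm _ _

lemma nat_key_div {P p B C : ℕ} (hB : B < P) (hP : 0 < P) (hp : 0 < p) :
    ((C * P + B) % (P * p)) / P = C % p := by
  rw [nat_key hB hp, mul_comm (C % p) P, Nat.mul_add_div hP, Nat.div_eq_of_lt hB, add_zero]

lemma cyc_pow_div {p d k : ℕ} (hp : 0 < p) (hk1 : k + 1 ≤ d) (i : ℕ) (x : Fin (p ^ d))
    (hx : (x : ℕ) < p ^ (k + 1)) :
    (((cycPerm p d (k + 1) ^ i) x : Fin (p ^ d)) : ℕ) / p ^ k = ((x : ℕ) / p ^ k + i) % p := by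
  have hpk : 0 < p ^ k := Nat.pow_pos hp
  have hdm := Nat.div_add_mod (x : ℕ) (p ^ k)
  rw [cyc_pow_val (by omega) hk1 i x hx]
  simp only [Nat.add_sub_cancel]
  have hps : p ^ (k + 1) = p ^ k * p := pow_succ _ _
  rw [hps]
  have hre : (x : ℕ) + i * p ^ k = ((x : ℕ) / p ^ k + i) * p ^ k + (x : ℕ) % p ^ k := by
    rw [add_mul, mul_comm ((x : ℕ) / p ^ k) (p ^ k)]
    omega
  rw [hre, nat_key_div (Nat.mod_lt _ hpk) hpk hp]

lemma Pgrp_zero (p d : ℕ) : Pgrp p d 0 = ⊥ := by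
  rw [Pgrp, Set.Icc_eq_empty (by omega : ¬ (1 : ℕ) ≤ 0), Set.image_empty,
    Subgroup.closure_empty]

lemma Pgrp_eq_WS {p d : ℕ} (hp : 0 < p) : ∀ k, k ≤ d → Pgrp p d k = WS p d k := by
  have hpd : 0 < p ^ d := Nat.pow_pos hp
  intro k
  induction k with
  | zero =>
    intro _
    apply le_antisymm
    · rw [Pgrp_zero]; exact bot_le
    · rintro g ⟨-, hfix⟩
      have hg1 : g = 1 := by
        apply Equiv.ext
        intro x
        rw [Equiv.Perm.one_apply]
        by_cases hx : (x : ℕ) < p ^ 0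
        · have h1 := fix_out_lt hfix x hx
          apply Fin.ext
          simp only [pow_zero] at hx h1
          omega
        · exact hfix x hx
      rw [hg1, Pgrp_zero]
      exact one_mem _
  | succ k ih =>
    intro hk1
    apply le_antisymm (Pgrp_le_WS hp hk1)
    rintro g ⟨hgaff, hgsupp⟩
    have hpk : 0 < p ^ k := Nat.pow_pos hp
    have hpk1 : 0 < p ^ (k + 1) := Nat.pow_pos hp
    set z0 : Fin (p ^ d) := ⟨0, hpd⟩ with hz0def
    have hz0val : (z0 : ℕ) = 0 := rfl
    have hgz0lt : ((g z0 : Fin (p ^ d)) : ℕ) < p ^ (k + 1) :=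
      fix_out_lt hgsupp z0 (by rw [hz0val]; exact hpk1)
    set c := ((g z0 : Fin (p ^ d)) : ℕ) / p ^ k with hcdef
    have hcp : c < p := by
      rw [hcdef]
      rw [pow_succ] at hgz0lt
      exact (Nat.div_lt_iff_lt_mul hpk).mpr (by rw [mul_comm p (p ^ k)]; exact hgz0lt)
    set t := cycPerm p d (k + 1) with htdef
    have htp : t ^ p = 1 := cyc_pow_p hp (by omega) hk1
    have hkey : ∀ x : Fin (p ^ d), (x : ℕ) < p ^ (k + 1) →
        ((g x : Fin (p ^ d)) : ℕ) / p ^ k = ((x : ℕ) / p ^ k + c) % p := by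
      intro x hx
      have hclass : (x : ℕ) / p ^ (k + 1) = (z0 : ℕ) / p ^ (k + 1) := by
        rw [hz0val, Nat.div_eq_of_lt hx, Nat.zero_div]
      have h3 := hgaff (k + 1) (by omega) hk1 x z0 hclass
      simp only [Nat.add_sub_cancel] at h3
      have hz0div : (z0 : ℕ) / p ^ k = 0 := by rw [hz0val, Nat.zero_div]
      rw [hz0div, ← hcdef] at h3
      have h4 : ((((g x : Fin (p ^ d)) : ℕ) / p ^ k : ℕ) : ZMod p)
          = ((((x : ℕ) / p ^ k + c : ℕ)) : ZMod p) := by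
        push_cast at h3 ⊢
        linear_combination h3
      have h5 := natcast_zmod_eq h4
      have hgxlt : ((g x : Fin (p ^ d)) : ℕ) < p ^ (k + 1) := fix_out_lt hgsupp x hx
      have hlt : ((g x : Fin (p ^ d)) : ℕ) / p ^ k < p := by
        rw [pow_succ] at hgxlt
        exact (Nat.div_lt_iff_lt_mul hpk).mpr (by rw [mul_comm p (p ^ k)]; exact hgxlt)
      rw [Nat.mod_eq_of_lt hlt] at h5
      exact h5
    set h := t ^ (p - c) * g with hhdef
    have hhaff : aff p d h := aff_mul (aff_pow (cyc_aff hp (by omega) hk1) _) hgaff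
    have hhsupp : ∀ x : Fin (p ^ d), ¬ ((x : ℕ) < p ^ (k + 1)) → h x = x := by
      intro x hx
      rw [hhdef, Equiv.Perm.mul_apply, hgsupp x hx, cyc_pow_fix _ x hx]
    have hhpres : ∀ x : Fin (p ^ d), ((h x : Fin (p ^ d)) : ℕ) / p ^ k = (x : ℕ) / p ^ k := by
      intro x
      by_cases hx : (x : ℕ) < p ^ (k + 1)
      · have hgxlt : ((g x : Fin (p ^ d)) : ℕ) < p ^ (k + 1) := fix_out_lt hgsupp x hx
        have hxklt : (x : ℕ) / p ^ k < p := by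
          rw [pow_succ] at hx
          exact (Nat.div_lt_iff_lt_mul hpk).mpr (by rw [mul_comm p (p ^ k)]; exact hx)
        rw [hhdef, Equiv.Perm.mul_apply, cyc_pow_div hp hk1 _ _ hgxlt, hkey x hx,
          Nat.mod_add_mod]
        have harg : (x : ℕ) / p ^ k + c + (p - c) = (x : ℕ) / p ^ k + p := by omega
        rw [harg, Nat.add_mod_right, Nat.mod_eq_of_lt hxklt]
      · rw [hhsupp x hx]
    have hhmem : h ∈ Pgrp p d (k + 1) := by
      apply piece_decomp hp hk1 hhaff hhsupp hhpres
      intro g' hg'aff ⟨i, hip, hfix⟩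
      set τ := t ^ i with hτdef
      have hτinv : τ⁻¹ = t ^ (p - i) := by
        apply inv_eq_of_mul_eq_one_right
        rw [hτdef, ← pow_add]
        have : i + (p - i) = p := by omega
        rw [this, htp]
      have hg'' : τ⁻¹ * g' * τ ∈ WS p d k := by
        refine ⟨aff_mul (aff_mul (by rw [hτinv]; exact aff_pow (cyc_aff hp (by omega) hk1) _)
          hg'aff) (aff_pow (cyc_aff hp (by omega) hk1) _), fun x hx => ?_⟩
        have hfixτx : g' (τ x) = τ x := by
          apply hfix
          by_cases hxk1 : (x : ℕ) < p ^ (k + 1)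
          · rw [hτdef, cyc_pow_div hp hk1 i x hxk1]
            have hx1 : 1 ≤ (x : ℕ) / p ^ k := by
              rw [Nat.one_le_div_iff hpk]
              omega
            have hx2 : (x : ℕ) / p ^ k < p := by
              rw [pow_succ] at hxk1
              exact (Nat.div_lt_iff_lt_mul hpk).mpr (by rw [mul_comm p (p ^ k)]; exact hxk1)
            intro hcon
            by_cases hs : (x : ℕ) / p ^ k + i < p
            · rw [Nat.mod_eq_of_lt hs] at hcon
              omega
            · rw [Nat.mod_eq_sub_mod (by omega),
                Nat.mod_eq_of_lt (by omega)] at hcon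
              omega
          · have hτx : τ x = x := by rw [hτdef]; exact cyc_pow_fix i x hxk1
            rw [hτx]
            intro hcon
            have : p ≤ (x : ℕ) / p ^ k := by
              rw [Nat.le_div_iff_mul_le hpk, mul_comm p (p ^ k), ← pow_succ]
              omega
            omega
        rw [Equiv.Perm.mul_apply, Equiv.Perm.mul_apply, hfixτx, ← Equiv.Perm.mul_apply,
          hτinv, hτdef, ← pow_add]
        have : p - i + i = p := by omega
        rw [this, htp, Equiv.Perm.one_apply]
      have hg''mem : τ⁻¹ * g' * τ ∈ Pgrp p d (k + 1) := by
        have h1 : τ⁻¹ * g' * τ ∈ Pgrp p d k := by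
          rw [ih (show k ≤ d by omega)]
          exact hg''
        exact Pgrp_mono (Nat.le_succ k) h1
      have hτmem : τ ∈ Pgrp p d (k + 1) := by
        rw [hτdef, htdef]
        exact pow_mem (gen_mem_Pgrp (by omega) le_rfl) _
      have : g' = τ * (τ⁻¹ * g' * τ) * τ⁻¹ := by group
      rw [this]
      exact mul_mem (mul_mem hτmem hg''mem) (inv_mem hτmem)
    have hgeq : g = t ^ c * h := by
      rw [hhdef, ← mul_assoc, ← pow_add]
      have : c + (p - c) = p := by omega
      rw [this, htp, one_mul]
    rw [hgeq]
    exact mul_mem (pow_mem (gen_mem_Pgrp (by omega) le_rfl) _) hhmem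

theorem stmt3 {p d : ℕ} (hp : p.Prime) (hd : 1 ≤ d)
    (P : Subgroup (Equiv.Perm (Fin (p ^ d)))) (hPle : P ≤ Pgrp p d d)
    -- (i) P contains a subgroup that is 𝔖_{p^d}-conjugate to P_{p^{d-1}}
    (σ : Equiv.Perm (Fin (p ^ d)))
    (hR : (Pgrp p d (d - 1)).map (MulAut.conj σ).toMonoidHom ≤ P)
    -- (ii) P contains an elementary abelian subgroup E of order p^d acting
    -- regularly on the p^d points
    (E : Subgroup (Equiv.Perm (Fin (p ^ d)))) (hEP : E ≤ P)
    (hEab : ∀ a ∈ E, ∀ b ∈ E, a * b = b * a)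
    (hEelem : ∀ a ∈ E, a ^ p = 1)
    (hEcard : Nat.card E = p ^ d)
    (hEreg : ∀ x y : Fin (p ^ d), ∃! g : E, (g : Equiv.Perm (Fin (p ^ d))) x = y) :
    P = Pgrp p d d := by
  clear hEab hEelem hEcard
  obtain ⟨d', rfl⟩ : ∃ d', d = d' + 1 := ⟨d - 1, by omega⟩
  clear hd
  simp only [Nat.add_sub_cancel] at hR
  have hp2 : 2 ≤ p := hp.two_le
  have hp0 : 0 < p := by omega
  have hpd : 0 < p ^ (d' + 1) := Nat.pow_pos hp0
  have hq : 0 < p ^ d' := Nat.pow_pos hp0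
  have hqp : p ^ d' * p = p ^ (d' + 1) := (pow_succ p d').symm
  have hqd : p ^ d' < p ^ (d' + 1) := by
    have h2A : p ^ d' * 2 ≤ p ^ d' * p := Nat.mul_le_mul_left _ hp2
    have h2B : p ^ d' * 2 = p ^ d' + p ^ d' := by ring
    omega
  set z0 : Fin (p ^ (d' + 1)) := ⟨0, hpd⟩ with hz0def
  have hz0val : (z0 : ℕ) = 0 := rfl
  set y0 : Fin (p ^ (d' + 1)) := ⟨p ^ d', hqd⟩ with hy0def
  have hy0val : (y0 : ℕ) = p ^ d' := rfl
  have hWtop : Pgrp p (d' + 1) (d' + 1) ≤ WS p (d' + 1) (d' + 1) := Pgrp_le_WS hp0 le_rfl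
  have hPaff : ∀ g ∈ P, aff p (d' + 1) g := fun g hg => (hWtop (hPle hg)).1
  have hblklt : ∀ x : Fin (p ^ (d' + 1)), (x : ℕ) / p ^ d' < p := by
    intro x
    apply (Nat.div_lt_iff_lt_mul hq).mpr
    rw [mul_comm p (p ^ d'), hqp]
    exact x.isLt
  -- the "block shift" identity for affine permutations
  have hshift : ∀ g : Equiv.Perm (Fin (p ^ (d' + 1))), aff p (d' + 1) g → ∀ x : Fin (p ^ (d' + 1)),
      ((((g x : Fin (p ^ (d' + 1))) : ℕ) / p ^ d' : ℕ) : ZMod p)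
        = (((x : ℕ) / p ^ d' : ℕ) : ZMod p)
          + ((((g z0 : Fin (p ^ (d' + 1))) : ℕ) / p ^ d' : ℕ) : ZMod p) := by
    intro g hg x
    have hclass : (x : ℕ) / p ^ (d' + 1) = (z0 : ℕ) / p ^ (d' + 1) := by
      rw [hz0val, Nat.div_eq_of_lt x.isLt, Nat.zero_div]
    have h3 := hg (d' + 1) (by omega) le_rfl x z0 hclass
    simp only [Nat.add_sub_cancel] at h3
    have hz0div : (z0 : ℕ) / p ^ d' = 0 := by rw [hz0val, Nat.zero_div]
    rw [hz0div] at h3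
    push_cast at h3 ⊢
    linear_combination h3
  have hblk_of_zmod : ∀ a b : ℕ, a < p → b < p → (a : ZMod p) = (b : ZMod p) → a = b := by
    intro a b ha hb hab
    have := natcast_zmod_eq hab
    rw [Nat.mod_eq_of_lt ha, Nat.mod_eq_of_lt hb] at this
    exact this
  have hEtrans : ∀ x y : Fin (p ^ (d' + 1)), ∃ e, e ∈ E ∧ e x = y := by
    intro x y
    obtain ⟨g, h1, -⟩ := hEreg x y
    exact ⟨(g : Equiv.Perm (Fin (p ^ (d' + 1)))), g.2, h1⟩
  have hconj_apply : ∀ w : Equiv.Perm (Fin (p ^ (d' + 1))),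
      (MulAut.conj σ).toMonoidHom w = σ * w * σ⁻¹ := fun w => rfl
  have hRmem : ∀ w ∈ Pgrp p (d' + 1) d', σ * w * σ⁻¹ ∈ P := by
    intro w hw
    apply hR
    exact Subgroup.mem_map.mpr ⟨w, hw, hconj_apply w⟩
  have hfixw : ∀ w ∈ Pgrp p (d' + 1) d', ∀ x : Fin (p ^ (d' + 1)), ¬ ((x : ℕ) < p ^ d') → w x = x :=
    fun w hw => ((Pgrp_le_WS hp0 (by omega)) hw).2
  -- Step A : σ maps the 0-th block into a single block i₀
  have hblkσ : ∀ x : Fin (p ^ (d' + 1)), (x : ℕ) < p ^ d' →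
      ((σ x : Fin (p ^ (d' + 1))) : ℕ) / p ^ d' = ((σ z0 : Fin (p ^ (d' + 1))) : ℕ) / p ^ d' := by
    intro x hx
    obtain ⟨w, hw, hwz⟩ := Pgrp_trans hp0 hz0val d' (by omega) x hx
    have hrP : σ * w * σ⁻¹ ∈ P := hRmem w hw
    have hraff : aff p (d' + 1) (σ * w * σ⁻¹) := hPaff _ hrP
    have hy0fix : (σ * w * σ⁻¹) (σ y0) = σ y0 := by
      simp only [Equiv.Perm.mul_apply, Equiv.Perm.inv_apply_self]
      rw [hfixw w hw y0 (by rw [hy0val]; omega)]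
    have hs := hshift _ hraff (σ y0)
    rw [hy0fix] at hs
    have hs0 : (((((σ * w * σ⁻¹) z0 : Fin (p ^ (d' + 1))) : ℕ) / p ^ d' : ℕ) : ZMod p) = 0 := by
      linear_combination -hs
    have hrσz : (σ * w * σ⁻¹) (σ z0) = σ x := by
      simp only [Equiv.Perm.mul_apply, Equiv.Perm.inv_apply_self]
      rw [hwz]
    have h5 := hshift _ hraff (σ z0)
    rw [hrσz, hs0, add_zero] at h5
    exact hblk_of_zmod _ _ (hblklt _) (hblklt _) h5
  set i₀ : ℕ := ((σ z0 : Fin (p ^ (d' + 1))) : ℕ) / p ^ d' with hi₀def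
  have hi₀p : i₀ < p := hblklt _
  -- Step B : R ≤ KS i₀
  have hRK : (Pgrp p (d' + 1) d').map (MulAut.conj σ).toMonoidHom ≤ KS p (d' + 1) i₀ := by
    intro x hx
    obtain ⟨w, hw, rfl⟩ := Subgroup.mem_map.mp hx
    rw [hconj_apply]
    refine ⟨hPaff _ (hRmem w hw), fun x hx => ?_⟩
    by_cases hu : ((σ⁻¹ x : Fin (p ^ (d' + 1))) : ℕ) < p ^ d'
    · exfalso
      apply hx
      have := hblkσ (σ⁻¹ x) hu
      rw [Equiv.Perm.apply_inv_self] at this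
      simp only [Nat.add_sub_cancel]
      exact this
    · simp only [Equiv.Perm.mul_apply]
      rw [hfixw w hw _ hu, Equiv.Perm.apply_inv_self]
  -- Step C : cardinalities force R = KS i₀
  have cardmap : ∀ (H : Subgroup (Equiv.Perm (Fin (p ^ (d' + 1)))))
      (φ : Equiv.Perm (Fin (p ^ (d' + 1))) ≃* Equiv.Perm (Fin (p ^ (d' + 1)))),
      Nat.card (H.map φ.toMonoidHom) = Nat.card H := by
    intro H φ
    exact (Nat.card_congr (H.equivMapOfInjective φ.toMonoidHom
      (EquivLike.injective φ)).toEquiv).symm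
  have hKW : KS p (d' + 1) 0 = WS p (d' + 1) d' := by
    ext g
    rw [mem_KS, mem_WS]
    simp only [Nat.add_sub_cancel]
    constructor
    · rintro ⟨h1, h2⟩
      exact ⟨h1, fun x hx => h2 x (fun hdiv => hx ((Nat.div_eq_zero_iff.mp hdiv).resolve_left (by omega)))⟩
    · rintro ⟨h1, h2⟩
      exact ⟨h1, fun x hx => h2 x (fun hlt => hx (Nat.div_eq_zero_iff.mpr (Or.inr hlt)))⟩
  set τ : Equiv.Perm (Fin (p ^ (d' + 1))) := cycPerm p (d' + 1) (d' + 1) ^ i₀ with hτdef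
  have hτaff : aff p (d' + 1) τ := aff_pow (cyc_aff hp0 (by omega) le_rfl) _
  have hτblk : ∀ x : Fin (p ^ (d' + 1)),
      ((τ x : Fin (p ^ (d' + 1))) : ℕ) / p ^ d' = ((x : ℕ) / p ^ d' + i₀) % p := by
    intro x
    exact cyc_pow_div hp0 le_rfl i₀ x x.isLt
  have hmodne : ∀ a : ℕ, a < p → a ≠ 0 → (a + i₀) % p ≠ i₀ := by
    intro a ha ha0 hcon
    by_cases hs : a + i₀ < p
    · rw [Nat.mod_eq_of_lt hs] at hcon
      omega
    · rw [Nat.mod_eq_sub_mod (by omega), Nat.mod_eq_of_lt (by omega)] at hcon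
      omega
  have hmapK : (KS p (d' + 1) 0).map (MulAut.conj τ).toMonoidHom = KS p (d' + 1) i₀ := by
    have hconjτ : ∀ w : Equiv.Perm (Fin (p ^ (d' + 1))),
        (MulAut.conj τ).toMonoidHom w = τ * w * τ⁻¹ := fun w => rfl
    apply le_antisymm
    · intro x hx
      obtain ⟨w, hw, rfl⟩ := Subgroup.mem_map.mp hx
      rw [hconjτ]
      rw [mem_KS] at hw ⊢
      simp only [Nat.add_sub_cancel] at hw ⊢
      obtain ⟨hw1, hw2⟩ := hw
      refine ⟨aff_mul (aff_mul hτaff hw1) (aff_inv hτaff), fun x hx => ?_⟩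
      have hu := hτblk (τ⁻¹ x)
      rw [Equiv.Perm.apply_inv_self] at hu
      have hune : ((τ⁻¹ x : Fin (p ^ (d' + 1))) : ℕ) / p ^ d' ≠ 0 := by
        intro h0
        rw [h0, zero_add, Nat.mod_eq_of_lt hi₀p] at hu
        exact hx hu
      simp only [Equiv.Perm.mul_apply]
      rw [hw2 _ hune, Equiv.Perm.apply_inv_self]
    · intro g hg
      rw [mem_KS] at hg
      simp only [Nat.add_sub_cancel] at hg
      obtain ⟨h1, h2⟩ := hg
      apply Subgroup.mem_map.mpr
      refine ⟨τ⁻¹ * g * τ, ?_, ?_⟩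
      · rw [mem_KS]
        simp only [Nat.add_sub_cancel]
        refine ⟨aff_mul (aff_mul (aff_inv hτaff) h1) hτaff, fun x hx => ?_⟩
        have hne : ((τ x : Fin (p ^ (d' + 1))) : ℕ) / p ^ d' ≠ i₀ := by
          rw [hτblk x]
          exact hmodne _ (hblklt x) hx
        simp only [Equiv.Perm.mul_apply]
        rw [h2 _ hne, Equiv.Perm.inv_apply_self]
      · rw [hconjτ]
        group
  have hcardK : Nat.card (KS p (d' + 1) i₀) = Nat.card ((Pgrp p (d' + 1) d').map (MulAut.conj σ).toMonoidHom) := by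
    rw [← hmapK, cardmap ((KS p (d' + 1) 0)) (MulAut.conj τ), hKW,
      ← Pgrp_eq_WS hp0 d' (by omega), cardmap]
  have hReq : (Pgrp p (d' + 1) d').map (MulAut.conj σ).toMonoidHom = KS p (d' + 1) i₀ := by
    apply SetLike.coe_injective
    apply Set.eq_of_subset_of_ncard_le hRK ?_ (Set.toFinite _)
    rw [← Nat.card_coe_set_eq, ← Nat.card_coe_set_eq]
    rw [SetLike.coe_sort_coe, SetLike.coe_sort_coe, hcardK]
  have hK0P : KS p (d' + 1) i₀ ≤ P := by
    rw [← hReq]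
    exact hR
  -- Step D : all blocks
  have hKiP : ∀ i, i < p → KS p (d' + 1) i ≤ P := by
    intro i hip
    have hylt : i * p ^ d' < p ^ (d' + 1) := by
      have h1 : (i + 1) * p ^ d' ≤ p * p ^ d' := Nat.mul_le_mul_right _ (by omega)
      have h2 : (i + 1) * p ^ d' = i * p ^ d' + p ^ d' := by ring
      have h3 : p * p ^ d' = p ^ d' * p := by ring
      omega
    obtain ⟨e, heE, hey⟩ := hEtrans (σ z0) ⟨i * p ^ d', hylt⟩
    have heaff := hPaff e (hEP heE)
    have hblkey : ((⟨i * p ^ d', hylt⟩ : Fin (p ^ (d' + 1))) : ℕ) / p ^ d' = i :=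
      Nat.mul_div_cancel _ hq
    have hkeyE : ∀ x : Fin (p ^ (d' + 1)), (x : ℕ) / p ^ d' ≠ i₀ →
        ((e x : Fin (p ^ (d' + 1))) : ℕ) / p ^ d' ≠ i := by
      intro x hx hcon
      have h1 := hshift e heaff x
      have h2 := hshift e heaff (σ z0)
      rw [hey] at h2
      rw [hblkey] at h2
      rw [hcon] at h1
      apply hx
      apply hblk_of_zmod _ _ (hblklt x) hi₀p
      linear_combination h2 - h1
    intro g hg
    rw [mem_KS] at hg
    simp only [Nat.add_sub_cancel] at hg
    obtain ⟨hgaff, hgfix⟩ := hg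
    have hconjmem : e⁻¹ * g * e ∈ KS p (d' + 1) i₀ := by
      rw [mem_KS]
      simp only [Nat.add_sub_cancel]
      refine ⟨aff_mul (aff_mul (aff_inv heaff) hgaff) heaff, fun x hx => ?_⟩
      simp only [Equiv.Perm.mul_apply]
      rw [hgfix _ (hkeyE x hx), Equiv.Perm.inv_apply_self]
    have hgdecomp : g = e * (e⁻¹ * g * e) * e⁻¹ := by group
    rw [hgdecomp]
    exact mul_mem (mul_mem (hEP heE) (hK0P hconjmem)) (inv_mem (hEP heE))
  -- Step E + F : every element of Pgrp p (d' + 1) d lies in P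
  apply le_antisymm hPle
  intro g hg
  have hgaff : aff p (d' + 1) g := (hWtop hg).1
  obtain ⟨e, heE, hez⟩ := hEtrans z0 (g z0)
  have heaff := hPaff e (hEP heE)
  have hhaff : aff p (d' + 1) (e⁻¹ * g) := aff_mul (aff_inv heaff) hgaff
  have hhpres : ∀ x : Fin (p ^ (d' + 1)),
      (((e⁻¹ * g) x : Fin (p ^ (d' + 1))) : ℕ) / p ^ d' = (x : ℕ) / p ^ d' := by
    intro x
    apply hblk_of_zmod _ _ (hblklt _) (hblklt _)
    have h1 := hshift g hgaff x
    have h2 := hshift e heaff (e⁻¹ (g x))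
    rw [Equiv.Perm.apply_inv_self, hez] at h2
    simp only [Equiv.Perm.mul_apply]
    linear_combination h1 - h2
  have hhsupp : ∀ x : Fin (p ^ (d' + 1)), ¬ ((x : ℕ) < p ^ (d' + 1)) → (e⁻¹ * g) x = x :=
    fun x hx => absurd x.isLt hx
  have hhP : (e⁻¹ * g) ∈ P := by
    apply piece_decomp hp0 (le_refl (d' + 1)) hhaff hhsupp hhpres
    rintro g' hg'aff ⟨i, hip, hfix⟩
    refine hKiP i hip ?_
    rw [mem_KS]
    simp only [Nat.add_sub_cancel]
    exact ⟨hg'aff, hfix⟩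
  have hgdecomp : g = e * (e⁻¹ * g) := by group
  rw [hgdecomp]
  exact mul_mem (hEP heE) hhP
end

section
/- Let $p$ be a prime, $n = p + \sum_{i=2}^{t} m_i p^i$ with $t \geq 2$ and $m_t \neq 0$, and let $E = E_{p,1} \times \prod_{i=2}^{t}\prod_{j=1}^{m_i} E_{p^i,j} \leq \mathfrak{S}_n$ be the direct product of elementary abelian groups acting regularly on pairwise disjoint subsets of $\{1,\ldots,n\}$, where $E_{p,1}$ has support $\{1,\ldots,p\}$ and each $E_{p^i,j}$ (of order $p^i$) acts regularly on its support, and the supports of all factors partition $\{1,\ldots,n\}$. If $P$ is a maximal subgroup of $E$ with $E_{p,1} \not\leq P$, then $P$ contains a subgroup $Q \leq \prod_{i=2}^{t}\prod_{j=1}^{m_i} E_{p^i,j}$ that acts without fixed points on $\{p+1,\ldots,n\}$. -/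
open Finset in
theorem stmt6 {p t n : ℕ} (hp : p.Prime) (ht : 2 ≤ t) (m : ℕ → ℕ) (hmt : m t ≠ 0)
    (hn : n = p + ∑ i ∈ Icc 2 t, m i * p ^ i)
    -- E_{p,1}: elementary abelian of order p, acting regularly on {1,…,p}
    -- (written 0-indexed: on the points x with x < p)
    (E0 : Subgroup (Equiv.Perm (Fin n)))
    (hE0card : Nat.card E0 = p)
    (hE0supp : ∀ g ∈ E0, ∀ x : Fin n, ¬ (x : ℕ) < p → g x = x)
    (hE0reg : ∀ x y : Fin n, (x : ℕ) < p → (y : ℕ) < p →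
      ∃! g : E0, (g : Equiv.Perm (Fin n)) x = y)
    -- the factors E_{p^i,j}, 2 ≤ i ≤ t, 1 ≤ j ≤ m i, of order p^i,
    -- acting regularly on their supports S i j
    (E : ℕ → ℕ → Subgroup (Equiv.Perm (Fin n))) (S : ℕ → ℕ → Set (Fin n))
    (hcard : ∀ i ∈ Icc 2 t, ∀ j ∈ Icc 1 (m i), Nat.card (E i j) = p ^ i)
    (helemab : ∀ i ∈ Icc 2 t, ∀ j ∈ Icc 1 (m i),
      (∀ a ∈ E i j, a ^ p = 1) ∧ ∀ a ∈ E i j, ∀ b ∈ E i j, a * b = b * a)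
    (hsupp : ∀ i ∈ Icc 2 t, ∀ j ∈ Icc 1 (m i), ∀ g ∈ E i j, ∀ x ∉ S i j, g x = x)
    (hreg : ∀ i ∈ Icc 2 t, ∀ j ∈ Icc 1 (m i), ∀ x ∈ S i j, ∀ y ∈ S i j,
      ∃! g : E i j, (g : Equiv.Perm (Fin n)) x = y)
    -- the supports S i j are contained in {p+1,…,n}, are pairwise disjoint,
    -- and together with {1,…,p} they partition {1,…,n}
    (hSge : ∀ i ∈ Icc 2 t, ∀ j ∈ Icc 1 (m i), ∀ x ∈ S i j, p ≤ (x : ℕ))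
    (hdisj : ∀ i ∈ Icc 2 t, ∀ j ∈ Icc 1 (m i), ∀ i' ∈ Icc 2 t, ∀ j' ∈ Icc 1 (m i'),
      (i, j) ≠ (i', j') → Disjoint (S i j) (S i' j'))
    (hcover : ∀ x : Fin n, p ≤ (x : ℕ) → ∃ i ∈ Icc 2 t, ∃ j ∈ Icc 1 (m i), x ∈ S i j)
    -- P is a maximal subgroup (i.e. of index p) of E = E0 × ∏_{i,j} E_{p^i,j}
    -- with E_{p,1} = E0 not contained in P
    (P : Subgroup (Equiv.Perm (Fin n)))
    (hPle : P ≤ E0 ⊔ ⨆ i ∈ Icc 2 t, ⨆ j ∈ Icc 1 (m i), E i j)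
    (hPmax : P.relIndex (E0 ⊔ ⨆ i ∈ Icc 2 t, ⨆ j ∈ Icc 1 (m i), E i j) = p)
    (hE0P : ¬ E0 ≤ P) :
    ∃ Q : Subgroup (Equiv.Perm (Fin n)), Q ≤ P ∧
      Q ≤ (⨆ i ∈ Icc 2 t, ⨆ j ∈ Icc 1 (m i), E i j) ∧
      ∀ x : Fin n, p ≤ (x : ℕ) → ∃ g ∈ Q, g x ≠ x := by

  classical
  set E' : Subgroup (Equiv.Perm (Fin n)) := ⨆ i ∈ Icc 2 t, ⨆ j ∈ Icc 1 (m i), E i j with hE'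
  refine ⟨P ⊓ E', inf_le_left, inf_le_right, ?_⟩
  intro x hx
  by_contra hcon
  push_neg at hcon
  obtain ⟨i, hi, j, hj, hxS⟩ := hcover x hx
  have hEF : E' ≤ E0 ⊔ E' := le_sup_right
  have hne : P.relIndex (E0 ⊔ E') ≠ 0 := by rw [hPmax]; exact hp.ne_zero
  have h1 : P.relIndex E' ≤ p := hPmax ▸ Subgroup.relIndex_le_of_le_right hEF hne
  -- the intersection is contained in the stabilizer of x in E'
  have hQst : (P ⊓ E').subgroupOf E' ≤ MulAction.stabilizer E' x := by
    rintro ⟨g, hgE⟩ hg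
    rw [Subgroup.mem_subgroupOf] at hg
    have := hcon g hg
    simpa [MulAction.mem_stabilizer_iff, Subgroup.smul_def, Equiv.Perm.smul_def] using this
  have hdvd : (MulAction.stabilizer E' x).index ∣ ((P ⊓ E').subgroupOf E').index :=
    Subgroup.index_dvd_of_le hQst
  have hQind : ((P ⊓ E').subgroupOf E').index = P.relIndex E' :=
    Subgroup.inf_relIndex_right P E'
  have hQne : ((P ⊓ E').subgroupOf E').index ≠ 0 := Subgroup.index_ne_zero_of_finite
  have hstab_le : (MulAction.stabilizer E' x).index ≤ p :=
    le_trans (Nat.le_of_dvd (Nat.pos_of_ne_zero hQne) hdvd) (hQind ▸ h1)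
  -- E i j ≤ E'
  have hEij : E i j ≤ E' := by
    refine le_trans (le_biSup _ hj) (le_biSup (fun i => ⨆ j ∈ Icc 1 (m i), E i j) hi)
  -- the orbit of x under E' has size at least p ^ i
  have horb : ∀ g : E i j, (g : Equiv.Perm (Fin n)) x ∈ MulAction.orbit E' x := by
    intro g
    exact ⟨⟨(g : Equiv.Perm (Fin n)), hEij g.2⟩, rfl⟩
  have hinj : Function.Injective
      (fun g : E i j => (⟨(g : Equiv.Perm (Fin n)) x, horb g⟩ : MulAction.orbit E' x)) := by
    intro a b hab
    have hab' : (a : Equiv.Perm (Fin n)) x = (b : Equiv.Perm (Fin n)) x := by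
      simpa using congrArg Subtype.val hab
    obtain ⟨g, hgx, hguniq⟩ := hreg i hi j hj x hxS x hxS
    have h1 : ((b⁻¹ * a : E i j) : Equiv.Perm (Fin n)) x = x := by
      simp [hab']
    have h2 : ((1 : E i j) : Equiv.Perm (Fin n)) x = x := by simp
    have := (hguniq _ h1).trans (hguniq _ h2).symm
    rwa [inv_mul_eq_one, eq_comm] at this
  have hcard_orbit : p ^ i ≤ (MulAction.orbit E' x).ncard := by
    rw [← Nat.card_coe_set_eq, ← hcard i hi j hj]
    exact Nat.card_le_card_of_injective _ hinj
  have horbeq : (MulAction.stabilizer E' x).index = (MulAction.orbit E' x).ncard :=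
    MulAction.index_stabilizer E' x
  have h2i : 2 ≤ i := (mem_Icc.mp hi).1
  have hpp : p < p ^ i := by
    calc p < p ^ 2 := by rw [pow_two]; exact lt_mul_of_one_lt_left hp.pos hp.one_lt
    _ ≤ p ^ i := Nat.pow_le_pow_right hp.pos h2i
  omega
end

section
/- Let $p$ be a prime and $d \geq 1$. In $\mathfrak{S}_{p^d}$ with generators $g_1,\ldots,g_d$ of $P_{p^d}$ as in the iterated wreath product construction, define inductively $g_{j,j+1} := \prod_{i=0}^{p-1} g_{j+1}^{i} g_j g_{j+1}^{-i}$ and $g_{j,\ldots,j+l+1} := \prod_{i=0}^{p-1} g_{j+l+1}^{i}\, g_{j,\ldots,j+l}\, g_{j+l+1}^{-i}$. Then the subgroup $E_{p^d} := \langle g_{1,\ldots,d},\, g_{2,\ldots,d},\, \ldots,\, g_{d-1,d},\, g_d \rangle$ is elementary abelian of order $p^d$ and acts regularly on $\{1,\ldots,p^d\}$. -/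
/-- The inductively defined elements `g_{j, j+1, …, j+l}`:
`eGen p d j 0 = g_j` and
`eGen p d j (l+1) = ∏_{i=0}^{p-1} g_{j+l+1}^i ⬝ (eGen p d j l) ⬝ g_{j+l+1}^{-i}`. -/
def eGen (p d j : ℕ) : ℕ → Equiv.Perm (Fin (p ^ d))
  | 0 => cycPerm p d j
  | l + 1 => ((List.range p).map fun i =>
      cycPerm p d (j + l + 1) ^ i * eGen p d j l * (cycPerm p d (j + l + 1) ^ i)⁻¹).prod

/-- The regular elementary abelian subgroup
`E_{p^d} = ⟨g_{1,…,d}, g_{2,…,d}, …, g_{d-1,d}, g_d⟩ ≤ 𝔖_{p^d}`. -/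
def Egrp (p d : ℕ) : Subgroup (Equiv.Perm (Fin (p ^ d))) :=
  Subgroup.closure ((fun j => eGen p d j (d - j)) '' (Set.Icc 1 d))


section EAux

variable {p d : ℕ}

def zEquiv (p : ℕ) [NeZero p] : Fin p ≃ ZMod p where
  toFun x := ((x : ℕ) : ZMod p)
  invFun z := ⟨z.val, ZMod.val_lt z⟩
  left_inv x := by
    ext
    simp [ZMod.val_cast_of_lt x.isLt]
  right_inv z := ZMod.natCast_rightInverse z

def digEquiv (p d : ℕ) [NeZero p] : Fin (p ^ d) ≃ (Fin d → ZMod p) :=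
  finFunctionFinEquiv.symm.trans (Equiv.piCongrRight fun _ => zEquiv p)

lemma digEquiv_apply [NeZero p] (x : Fin (p ^ d)) (i : Fin d) :
    digEquiv p d x i = (((x : ℕ) / p ^ (i : ℕ) % p : ℕ) : ZMod p) := rfl

/-- The conditional addition permutation. -/
def condAdd (p : ℕ) {d : ℕ} (m : ℕ) (v : Fin d → ZMod p)
    (hv : ∀ i : Fin d, m ≤ (i : ℕ) → v i = 0) : Equiv.Perm (Fin d → ZMod p) where
  toFun f := if ∀ i : Fin d, m ≤ (i : ℕ) → f i = 0 then f + v else f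
  invFun f := if ∀ i : Fin d, m ≤ (i : ℕ) → f i = 0 then f - v else f
  left_inv f := by
    dsimp only
    by_cases h : ∀ i : Fin d, m ≤ (i : ℕ) → f i = 0
    · have h2 : ∀ i : Fin d, m ≤ (i : ℕ) → (f + v) i = 0 := fun i hi => by
        simp [h i hi, hv i hi]
      rw [if_pos h, if_pos h2, add_sub_cancel_right]
    · rw [if_neg h, if_neg h]
  right_inv f := by
    dsimp only
    by_cases h : ∀ i : Fin d, m ≤ (i : ℕ) → f i = 0
    · have h2 : ∀ i : Fin d, m ≤ (i : ℕ) → (f - v) i = 0 := fun i hi => by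
        simp [h i hi, hv i hi]
      rw [if_pos h, if_pos h2, sub_add_cancel]
    · rw [if_neg h, if_neg h]

lemma condAdd_apply (m : ℕ) (v : Fin d → ZMod p) (hv) (f : Fin d → ZMod p) :
    condAdd p m v hv f = if ∀ i : Fin d, m ≤ (i : ℕ) → f i = 0 then f + v else f := rfl

lemma condAdd_mul (m : ℕ) (v w : Fin d → ZMod p) (hv hw) :
    condAdd p m v hv * condAdd p m w hw
      = condAdd p m (w + v) (fun i hi => by simp [hv i hi, hw i hi]) := by
  ext f
  simp only [Equiv.Perm.mul_apply, condAdd_apply]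
  by_cases h : ∀ i : Fin d, m ≤ (i : ℕ) → f i = 0
  · have h2 : ∀ i : Fin d, m ≤ (i : ℕ) → (f + w) i = 0 := fun i hi => by
      simp [h i hi, hw i hi]
    rw [if_pos h, if_pos h2, if_pos h, add_assoc]
  · rw [if_neg h, if_neg h, if_neg h]

lemma condAdd_congr (m : ℕ) {v w : Fin d → ZMod p} (hv hw) (h : v = w) :
    condAdd p m v hv = condAdd p m w hw := by subst h; rfl

lemma condAdd_zero (m : ℕ) (hv) : condAdd p m (0 : Fin d → ZMod p) hv = 1 := by
  ext f
  simp [condAdd_apply]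

lemma condAdd_pow (m : ℕ) (v : Fin d → ZMod p) (hv) (n : ℕ) :
    (condAdd p m v hv) ^ n
      = condAdd p m (n • v) (fun i hi => by simp [hv i hi]) := by
  induction n with
  | zero => simpa using (condAdd_zero m _).symm
  | succ n ih =>
    rw [pow_succ, ih, condAdd_mul]
    exact condAdd_congr _ _ _ (by rw [add_nsmul, one_nsmul, add_comm])

lemma condAdd_inv (m : ℕ) (v : Fin d → ZMod p) (hv) :
    (condAdd p m v hv)⁻¹ = condAdd p m (-v) (fun i hi => by simp [hv i hi]) := by
  rw [eq_comm, eq_inv_iff_mul_eq_one, condAdd_mul]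
  simpa using condAdd_zero m _

lemma cond_add_iff (m : ℕ) {w : Fin d → ZMod p} (hw : ∀ i : Fin d, m ≤ (i : ℕ) → w i = 0)
    (f : Fin d → ZMod p) :
    (∀ i : Fin d, m ≤ (i : ℕ) → (f + w) i = 0) ↔ (∀ i : Fin d, m ≤ (i : ℕ) → f i = 0) := by
  constructor
  · intro h i hi
    have := h i hi
    simpa [hw i hi] using this
  · intro h i hi
    simp [h i hi, hw i hi]

lemma cond_split {m : ℕ} (hm : m < d) (g : Fin d → ZMod p) :
    (∀ k : Fin d, m ≤ (k : ℕ) → g k = 0)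
      ↔ (∀ k : Fin d, m + 1 ≤ (k : ℕ) → g k = 0) ∧ g ⟨m, hm⟩ = 0 := by
  constructor
  · exact fun h => ⟨fun k hk => h k (by omega), h ⟨m, hm⟩ (le_refl _)⟩
  · rintro ⟨h1, h2⟩ k hk
    rcases eq_or_lt_of_le hk with h | h
    · have : k = ⟨m, hm⟩ := Fin.ext h.symm
      rw [this]; exact h2
    · exact h1 k h

lemma single_level {m : ℕ} (hm : m < d) (z : ZMod p) :
    ∀ i : Fin d, m + 1 ≤ (i : ℕ) → (Pi.single (⟨m, hm⟩ : Fin d) z : Fin d → ZMod p) i = 0 := by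
  intro i hi
  apply Pi.single_eq_of_ne
  intro h
  rw [h] at hi
  simp at hi

lemma conj_apply {m : ℕ} (hm : m < d) (v : Fin d → ZMod p)
    (hv : ∀ i : Fin d, m ≤ (i : ℕ) → v i = 0) (i : ℕ) (f : Fin d → ZMod p) :
    ((condAdd p (m + 1) (Pi.single (⟨m, hm⟩ : Fin d) (1 : ZMod p)) (single_level hm 1)) ^ i
      * condAdd p m v hv
      * ((condAdd p (m + 1) (Pi.single (⟨m, hm⟩ : Fin d) (1 : ZMod p)) (single_level hm 1)) ^ i)⁻¹) f
    = if (∀ k : Fin d, m + 1 ≤ (k : ℕ) → f k = 0) ∧ f ⟨m, hm⟩ = ((i : ℕ) : ZMod p)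
      then f + v else f := by
  have hv1 : ∀ k : Fin d, m + 1 ≤ (k : ℕ) → v k = 0 := fun k hk => hv k (by omega)
  set z : ZMod p := ((i : ℕ) : ZMod p) with hz
  set s : Fin d → ZMod p := Pi.single (⟨m, hm⟩ : Fin d) (-z) with hs
  set u : Fin d → ZMod p := Pi.single (⟨m, hm⟩ : Fin d) z with hu
  have hsk : ∀ k : Fin d, k ≠ ⟨m, hm⟩ → s k = 0 := fun k hk => Pi.single_eq_of_ne hk _
  have huk : ∀ k : Fin d, k ≠ ⟨m, hm⟩ → u k = 0 := fun k hk => Pi.single_eq_of_ne hk _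
  have hδz : ∀ k : Fin d, m + 1 ≤ (k : ℕ) → u k = 0 := single_level hm z
  have hδz' : ∀ k : Fin d, m + 1 ≤ (k : ℕ) → s k = 0 := single_level hm (-z)
  have hsm : (i • (Pi.single (⟨m, hm⟩ : Fin d) (1 : ZMod p) : Fin d → ZMod p)) = u := by
    ext k
    by_cases hk : k = ⟨m, hm⟩
    · subst hk; simp [hu, Pi.single_eq_same, hz]
    · simp [huk k hk, Pi.single_eq_of_ne hk]
  have hneg : -(i • (Pi.single (⟨m, hm⟩ : Fin d) (1 : ZMod p) : Fin d → ZMod p)) = s := by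
    rw [hsm]
    ext k
    by_cases hk : k = ⟨m, hm⟩
    · subst hk; simp [hs, hu, Pi.single_eq_same]
    · simp [hsk k hk, huk k hk]
  rw [condAdd_pow, condAdd_inv, condAdd_congr _ _ hδz hsm, condAdd_congr _ _ hδz' hneg]
  simp only [Equiv.Perm.mul_apply, condAdd_apply]
  by_cases h1 : ∀ k : Fin d, m + 1 ≤ (k : ℕ) → f k = 0
  · rw [if_pos h1]
    have hC1g : ∀ k : Fin d, m + 1 ≤ (k : ℕ) → (f + s) k = 0 := fun k hk => by
      simp [h1 k hk, hδz' k hk]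
    by_cases h2 : f ⟨m, hm⟩ = z
    · have hC0g : ∀ k : Fin d, m ≤ (k : ℕ) → (f + s) k = 0 := by
        rw [cond_split hm]
        exact ⟨hC1g, by simp [hs, Pi.single_eq_same, h2]⟩
      rw [if_pos hC0g]
      have hC1gv : ∀ k : Fin d, m + 1 ≤ (k : ℕ) → (f + s + v) k = 0 := fun k hk => by
        simp [h1 k hk, hδz' k hk, hv1 k hk]
      rw [if_pos hC1gv, if_pos ⟨h1, h2⟩]
      ext k
      by_cases hk : k = ⟨m, hm⟩
      · subst hk
        simp only [Pi.add_apply, hs, hu, Pi.single_eq_same]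
        ring
      · simp only [Pi.add_apply, hsk k hk, huk k hk]
        ring
    · have hC0g : ¬ ∀ k : Fin d, m ≤ (k : ℕ) → (f + s) k = 0 := by
        rw [cond_split hm]
        rintro ⟨-, hc⟩
        simp only [Pi.add_apply, hs, Pi.single_eq_same] at hc
        exact h2 (by linear_combination hc)
      rw [if_neg hC0g, if_pos hC1g, if_neg (by rintro ⟨-, hc⟩; exact h2 hc)]
      ext k
      by_cases hk : k = ⟨m, hm⟩
      · subst hk
        simp only [Pi.add_apply, hs, hu, Pi.single_eq_same]
        ring
      · simp only [Pi.add_apply, hsk k hk, huk k hk]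
        ring
  · rw [if_neg h1]
    have hC0f : ¬ ∀ k : Fin d, m ≤ (k : ℕ) → f k = 0 := fun h =>
      h1 ((cond_split hm f).1 h).1
    rw [if_neg hC0f, if_neg h1, if_neg (by rintro ⟨hc, -⟩; exact h1 hc)]

lemma prod_conj_list {m : ℕ} (hm : m < d) (v : Fin d → ZMod p)
    (hv : ∀ i : Fin d, m ≤ (i : ℕ) → v i = 0) (L : List ℕ) (f : Fin d → ZMod p) :
    ((L.map fun i =>
      (condAdd p (m + 1) (Pi.single (⟨m, hm⟩ : Fin d) (1 : ZMod p)) (single_level hm 1)) ^ i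
      * condAdd p m v hv
      * ((condAdd p (m + 1) (Pi.single (⟨m, hm⟩ : Fin d) (1 : ZMod p)) (single_level hm 1)) ^ i)⁻¹).prod) f
    = if ∀ k : Fin d, m + 1 ≤ (k : ℕ) → f k = 0
      then f + (L.countP fun i => decide (((i : ℕ) : ZMod p) = f ⟨m, hm⟩)) • v
      else f := by
  induction L with
  | nil =>
    simp only [List.map_nil, List.prod_nil, Equiv.Perm.one_apply, List.countP_nil, zero_smul,
      add_zero]
    split <;> rfl
  | cons i L ih =>
    rw [List.map_cons, List.prod_cons, Equiv.Perm.mul_apply, ih]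
    by_cases h1 : ∀ k : Fin d, m + 1 ≤ (k : ℕ) → f k = 0
    · rw [if_pos h1]
      set cnt := L.countP fun i => decide (((i : ℕ) : ZMod p) = f ⟨m, hm⟩) with hcnt
      have hcv : ∀ k : Fin d, m ≤ (k : ℕ) → (cnt • v) k = 0 := fun k hk => by
        rw [Pi.smul_apply, hv k hk, smul_zero]
      rw [conj_apply hm v hv i (f + cnt • v)]
      have hgm : (f + cnt • v) ⟨m, hm⟩ = f ⟨m, hm⟩ := by
        rw [Pi.add_apply, hcv ⟨m, hm⟩ (le_refl m), add_zero]
      have hC1g : (∀ k : Fin d, m + 1 ≤ (k : ℕ) → (f + cnt • v) k = 0) := fun k hk => by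
        rw [Pi.add_apply, h1 k hk, hcv k (by omega), add_zero]
      rw [List.countP_cons, if_pos h1]
      by_cases h2 : ((i : ℕ) : ZMod p) = f ⟨m, hm⟩
      · rw [if_pos ⟨hC1g, by rw [hgm, h2]⟩]
        have : (cnt + if (fun i => decide (((i : ℕ) : ZMod p) = f ⟨m, hm⟩)) i = true then 1
            else 0) = cnt + 1 := by simp [h2]
        rw [this, add_smul, one_smul, add_assoc]
      · rw [if_neg (by rintro ⟨-, hc⟩; rw [hgm] at hc; exact h2 hc.symm)]
        have : (cnt + if (fun i => decide (((i : ℕ) : ZMod p) = f ⟨m, hm⟩)) i = true then 1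
            else 0) = cnt := by simp [h2]
        rw [this]
    · rw [if_neg h1, conj_apply hm v hv i f, if_neg (by rintro ⟨hc, -⟩; exact h1 hc),
        if_neg h1]

lemma prod_conj_range [NeZero p] {m : ℕ} (hm : m < d) (v : Fin d → ZMod p)
    (hv : ∀ i : Fin d, m ≤ (i : ℕ) → v i = 0) :
    (((List.range p).map fun i =>
      (condAdd p (m + 1) (Pi.single (⟨m, hm⟩ : Fin d) (1 : ZMod p)) (single_level hm 1)) ^ i
      * condAdd p m v hv
      * ((condAdd p (m + 1) (Pi.single (⟨m, hm⟩ : Fin d) (1 : ZMod p)) (single_level hm 1)) ^ i)⁻¹).prod)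
    = condAdd p (m + 1) v (fun k hk => hv k (by omega)) := by
  ext f
  rw [prod_conj_list, condAdd_apply]
  by_cases h1 : ∀ k : Fin d, m + 1 ≤ (k : ℕ) → f k = 0
  · rw [if_pos h1, if_pos h1]
    have hcount : ((List.range p).countP fun i =>
        decide (((i : ℕ) : ZMod p) = f ⟨m, hm⟩)) = 1 := by
      set t := f ⟨m, hm⟩ with ht
      have h1 : (List.range p).countP (fun i => decide (((i:ℕ) : ZMod p) = t))
          = List.count t.val (List.range p) := by
        rw [List.count]
        refine List.countP_congr (fun x hx => ?_)
        rw [List.mem_range] at hx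
        simp only [decide_eq_true_eq, beq_iff_eq]
        constructor
        · intro h; rw [← h, ZMod.val_cast_of_lt hx]
        · rintro rfl; exact ZMod.natCast_rightInverse t
      rw [h1]
      exact List.count_eq_one_of_mem List.nodup_range (List.mem_range.2 (ZMod.val_lt t))
    rw [hcount, one_smul]
  · rw [if_neg h1, if_neg h1]

variable {p d : ℕ}

lemma digit_high (hp : 1 < p) {x j k : ℕ} (hx : x < p ^ j) (hk : j ≤ k) :
    x / p ^ k % p = 0 := by
  have : x < p ^ k := lt_of_lt_of_le hx (Nat.pow_le_pow_right (by omega) hk)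
  rw [Nat.div_eq_of_lt this, Nat.zero_mod]

lemma digit_lowbound (hp : 1 < p) {x j : ℕ} (hxd : x < p ^ d) (hj : j ≤ d)
    (h : ∀ k, j ≤ k → k < d → x / p ^ k % p = 0) : x < p ^ j := by
  by_contra hc
  push_neg at hc
  have hx0 : x ≠ 0 := by
    intro h0
    have : 0 < p ^ j := Nat.pow_pos (show 0 < p by omega)
    omega
  set L := Nat.log p x with hL
  have h1 : p ^ L ≤ x := Nat.pow_log_le_self p hx0
  have h2 : x < p ^ (L + 1) := Nat.lt_pow_succ_log_self hp x
  have hjL : j ≤ L := by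
    by_contra hjL
    push_neg at hjL
    exact absurd (lt_of_lt_of_le h2 (Nat.pow_le_pow_right (by omega) (by omega))) hc.not_gt
  have hLd : L < d := by
    by_contra hLd
    push_neg at hLd
    exact absurd (le_trans (Nat.pow_le_pow_right (by omega) hLd) h1) hxd.not_ge
  have hdig : x / p ^ L % p = 0 := h L hjL hLd
  have hge : 1 ≤ x / p ^ L := (Nat.one_le_div_iff (by positivity)).2 h1
  have hlt : x / p ^ L < p := by
    rw [Nat.div_lt_iff_lt_mul (by positivity : (0:ℕ) < p ^ L)]
    calc x < p ^ (L + 1) := h2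
      _ = p * p ^ L := by ring
  rw [Nat.mod_eq_of_lt hlt] at hdig
  omega

lemma digit_step (hp : 1 < p) {x m : ℕ} (hx : x < p ^ (m + 1)) (k : ℕ) :
    ((((x + p ^ m) % p ^ (m + 1)) / p ^ k % p : ℕ) : ZMod p)
      = ((x / p ^ k % p : ℕ) : ZMod p) + (if k = m then 1 else 0) := by
  have hpm : (0:ℕ) < p ^ m := by positivity
  have hpow : p ^ (m + 1) = p ^ m * p := pow_succ p m
  have ht : x / p ^ m < p := by
    rw [Nat.div_lt_iff_lt_mul hpm, mul_comm]
    rw [hpow] at hx; exact hx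
  have hxr : p ^ m * (x / p ^ m) + x % p ^ m = x := Nat.div_add_mod x (p ^ m)
  have hr : x % p ^ m < p ^ m := Nat.mod_lt x hpm
  set t := x / p ^ m with htdef
  set r := x % p ^ m with hrdef
  rcases lt_or_eq_of_le (Nat.succ_le_of_lt ht) with htp | htp
  · -- no wrap: t + 1 < p
    have htp' : t + 1 < p := htp
    have hy : (x + p ^ m) % p ^ (m + 1) = x + p ^ m := by
      apply Nat.mod_eq_of_lt
      rw [hpow]
      calc x + p ^ m = p ^ m * (t + 1) + r := by rw [Nat.mul_add, mul_one]; omega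
        _ < p ^ m * (t + 1) + p ^ m * 1 := by omega
        _ = p ^ m * (t + 2) := by ring
        _ ≤ p ^ m * p := Nat.mul_le_mul_left _ (by omega)
    rw [hy]
    rcases lt_trichotomy k m with hk | hk | hk
    · rw [if_neg (by omega)]
      have hsplit : p ^ (m - k - 1) * p * p ^ k = p ^ m := by
        rw [← pow_succ, ← pow_add]
        congr 1
        omega
      have hdiv : (x + p ^ m) / p ^ k = x / p ^ k + p ^ (m - k - 1) * p := by
        rw [← hsplit, Nat.add_mul_div_right _ _ (by positivity : (0:ℕ) < p ^ k)]
      rw [hdiv, Nat.add_mul_mod_self_right, add_zero]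
    · subst hk
      rw [if_pos rfl, Nat.add_div_right _ hpm, ← htdef,
        Nat.mod_eq_of_lt (by omega : t + 1 < p), Nat.mod_eq_of_lt ht]
      push_cast
      ring
    · rw [if_neg (by omega)]
      have h1 : (x + p ^ m) / p ^ k = 0 := Nat.div_eq_of_lt (by
        calc x + p ^ m < p ^ (m + 1) := by rw [hpow]; nlinarith
          _ ≤ p ^ k := Nat.pow_le_pow_right (by omega) (by omega))
      have h2 : x / p ^ k = 0 := Nat.div_eq_of_lt
        (lt_of_lt_of_le hx (Nat.pow_le_pow_right (by omega) (by omega)))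
      rw [h1, h2]
      simp
  · -- wrap: t + 1 = p
    have htp' : t + 1 = p := htp
    have hy : (x + p ^ m) % p ^ (m + 1) = r := by
      have he : x + p ^ m = p ^ (m + 1) + r := by
        rw [hpow]
        calc x + p ^ m = p ^ m * (t + 1) + r := by rw [Nat.mul_add, mul_one]; omega
          _ = p ^ m * p + r := by rw [htp']
      rw [he, Nat.add_mod_left, Nat.mod_eq_of_lt (by nlinarith)]
    rw [hy]
    rcases lt_trichotomy k m with hk | hk | hk
    · rw [if_neg (by omega)]
      have hsplit : t * (p ^ (m - k - 1) * p) * p ^ k = p ^ m * t := by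
        rw [← pow_succ, mul_assoc, ← pow_add,
          show m - k - 1 + 1 + k = m from by omega, mul_comm]
      have hx2 : x = r + t * (p ^ (m - k - 1) * p) * p ^ k := by rw [hsplit]; omega
      have hdiv : x / p ^ k = r / p ^ k + t * (p ^ (m - k - 1) * p) := by
        rw [hx2, Nat.add_mul_div_right _ _ (by positivity : (0:ℕ) < p ^ k)]
      rw [hdiv, ← mul_assoc, Nat.add_mul_mod_self_right, add_zero]
    · subst hk
      rw [if_pos rfl, Nat.div_eq_of_lt hr, Nat.zero_mod, ← htdef, Nat.mod_eq_of_lt ht]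
      have : ((t : ℕ) : ZMod p) + 1 = ((p : ℕ) : ZMod p) := by
        rw [← htp']
        push_cast
        ring
      rw [this, ZMod.natCast_self]
      simp
    · rw [if_neg (by omega)]
      have h1 : r / p ^ k = 0 := Nat.div_eq_of_lt (by
        calc r < p ^ m := hr
          _ ≤ p ^ k := Nat.pow_le_pow_right (by omega) (by omega))
      have h2 : x / p ^ k = 0 := Nat.div_eq_of_lt
        (lt_of_lt_of_le hx (Nat.pow_le_pow_right (by omega) (by omega)))
      rw [h1, h2]
      simp

lemma cycPerm_eq [NeZero p] (hp : 1 < p) {m : ℕ} (hm : m < d) :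
    cycPerm p d (m + 1)
      = Equiv.permCongr (digEquiv p d).symm
          (condAdd p (m + 1) (Pi.single (⟨m, hm⟩ : Fin d) (1 : ZMod p)) (single_level hm 1)) := by
  refine Equiv.ext fun x => ?_
  rw [Equiv.permCongr_apply, Equiv.symm_symm, condAdd_apply]
  have hcnd : (∀ k : Fin d, m + 1 ≤ (k : ℕ) → digEquiv p d x k = 0) ↔ (x : ℕ) < p ^ (m + 1) := by
    constructor
    · intro h
      refine digit_lowbound hp x.isLt (by omega) fun k hk1 hk2 => ?_
      have h2 := h ⟨k, hk2⟩ hk1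
      rw [digEquiv_apply] at h2
      have hdvd := (ZMod.natCast_eq_zero_iff _ p).1 h2
      exact Nat.eq_zero_of_dvd_of_lt hdvd (Nat.mod_lt _ (by omega))
    · intro h k hk
      rw [digEquiv_apply, digit_high hp h hk, Nat.cast_zero]
  by_cases hlt : (x : ℕ) < p ^ (m + 1)
  · rw [if_pos (hcnd.2 hlt)]
    have hc : (x : ℕ) < p ^ (m + 1) ∧ m + 1 ≤ d ∧ 1 ≤ m + 1 := ⟨hlt, by omega, by omega⟩
    show (if h : (x : ℕ) < p ^ (m + 1) ∧ m + 1 ≤ d ∧ 1 ≤ m + 1 then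
        (⟨((x : ℕ) + p ^ (m + 1 - 1)) % p ^ (m + 1), cycBound h.1 h.2.1 h.2.2 _⟩ : Fin (p ^ d))
      else x) = (digEquiv p d).symm (digEquiv p d x + Pi.single ⟨m, hm⟩ 1)
    rw [dif_pos hc, Equiv.eq_symm_apply]
    funext k
    rw [Pi.add_apply, digEquiv_apply, digEquiv_apply]
    simp only [Fin.val_mk]
    rw [show m + 1 - 1 = m from rfl, digit_step hp hlt (k : ℕ)]
    congr 1
    by_cases hk : k = ⟨m, hm⟩
    · subst hk
      rw [if_pos rfl, Pi.single_eq_same]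
    · rw [if_neg (fun h => hk (Fin.ext h)), Pi.single_eq_of_ne hk]
  · rw [if_neg (fun h => hlt (hcnd.1 h)), Equiv.symm_apply_apply]
    show (if h : (x : ℕ) < p ^ (m + 1) ∧ m + 1 ≤ d ∧ 1 ≤ m + 1 then
        (⟨((x : ℕ) + p ^ (m + 1 - 1)) % p ^ (m + 1), cycBound h.1 h.2.1 h.2.2 _⟩ : Fin (p ^ d))
      else x) = x
    rw [dif_neg (fun h => hlt h.1)]

lemma condAdd_level_congr {m m' : ℕ} (h : m = m') (v : Fin d → ZMod p) (hv hv') :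
    condAdd p m v hv = condAdd p m' v hv' := by subst h; rfl

def permMulEquiv (p d : ℕ) [NeZero p] :
    Equiv.Perm (Fin d → ZMod p) ≃* Equiv.Perm (Fin (p ^ d)) :=
  { Equiv.permCongr (digEquiv p d).symm with
    map_mul' := fun σ τ => by
      ext x
      simp [Equiv.permCongr_apply] }

lemma permMulEquiv_apply [NeZero p] (σ : Equiv.Perm (Fin d → ZMod p)) (x : Fin (p ^ d)) :
    permMulEquiv p d σ x = (digEquiv p d).symm (σ (digEquiv p d x)) := by
  simp [permMulEquiv, Equiv.permCongr_apply]

lemma eGen_eq [NeZero p] (hp : 1 < p) {m : ℕ} (hm : m < d) :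
    ∀ l, m + 1 + l ≤ d →
    eGen p d (m + 1) l = permMulEquiv p d
      (condAdd p (m + 1 + l) (Pi.single (⟨m, hm⟩ : Fin d) (1 : ZMod p))
        (fun k hk => single_level hm 1 k (by omega)))
  | 0, hl => by
    have h0 : eGen p d (m + 1) 0 = cycPerm p d (m + 1) := rfl
    rw [h0, cycPerm_eq hp hm]
    rfl
  | l + 1, hl => by
    have hml : m + 1 + l < d := by omega
    have ih := eGen_eq hp hm l (by omega)
    show ((List.range p).map fun i =>
        cycPerm p d (m + 1 + l + 1) ^ i * eGen p d (m + 1) l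
          * (cycPerm p d (m + 1 + l + 1) ^ i)⁻¹).prod = _
    rw [cycPerm_eq hp hml, ih]
    have hfun : (fun i => (Equiv.permCongr (digEquiv p d).symm
          (condAdd p (m + 1 + l + 1) (Pi.single (⟨m + 1 + l, hml⟩ : Fin d) (1 : ZMod p))
            (single_level hml 1))) ^ i
        * permMulEquiv p d (condAdd p (m + 1 + l) (Pi.single (⟨m, hm⟩ : Fin d) (1 : ZMod p))
            (fun k hk => single_level hm 1 k (by omega)))
        * ((Equiv.permCongr (digEquiv p d).symm
          (condAdd p (m + 1 + l + 1) (Pi.single (⟨m + 1 + l, hml⟩ : Fin d) (1 : ZMod p))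
            (single_level hml 1))) ^ i)⁻¹)
      = fun i => permMulEquiv p d
          ((condAdd p (m + 1 + l + 1) (Pi.single (⟨m + 1 + l, hml⟩ : Fin d) (1 : ZMod p))
            (single_level hml 1)) ^ i
          * condAdd p (m + 1 + l) (Pi.single (⟨m, hm⟩ : Fin d) (1 : ZMod p))
            (fun k hk => single_level hm 1 k (by omega))
          * ((condAdd p (m + 1 + l + 1) (Pi.single (⟨m + 1 + l, hml⟩ : Fin d) (1 : ZMod p))
            (single_level hml 1)) ^ i)⁻¹) := by
      funext i
      rw [map_mul, map_mul, map_pow, map_inv, map_pow]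
      rfl
    rw [hfun]
    rw [show (fun i => permMulEquiv p d
        ((condAdd p (m + 1 + l + 1) (Pi.single (⟨m + 1 + l, hml⟩ : Fin d) (1 : ZMod p))
            (single_level hml 1)) ^ i
          * condAdd p (m + 1 + l) (Pi.single (⟨m, hm⟩ : Fin d) (1 : ZMod p))
            (fun k hk => single_level hm 1 k (by omega))
          * ((condAdd p (m + 1 + l + 1) (Pi.single (⟨m + 1 + l, hml⟩ : Fin d) (1 : ZMod p))
            (single_level hml 1)) ^ i)⁻¹))
      = (permMulEquiv p d) ∘ (fun i =>
          (condAdd p (m + 1 + l + 1) (Pi.single (⟨m + 1 + l, hml⟩ : Fin d) (1 : ZMod p))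
            (single_level hml 1)) ^ i
          * condAdd p (m + 1 + l) (Pi.single (⟨m, hm⟩ : Fin d) (1 : ZMod p))
            (fun k hk => single_level hm 1 k (by omega))
          * ((condAdd p (m + 1 + l + 1) (Pi.single (⟨m + 1 + l, hml⟩ : Fin d) (1 : ZMod p))
            (single_level hml 1)) ^ i)⁻¹) from rfl,
      ← List.map_map]
    have hmlp : ∀ L : List (Equiv.Perm (Fin d → ZMod p)),
        (List.map (⇑(permMulEquiv p d)) L).prod = permMulEquiv p d L.prod := by
      intro L
      induction L with
      | nil => simp
      | cons a L ih2 => simp [ih2]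
    rw [hmlp]
    congr 1
    rw [prod_conj_range hml _ (fun k hk => single_level hm 1 k (by omega))]
    rfl

def trHom (p d : ℕ) [NeZero p] :
    Multiplicative (Fin d → ZMod p) →* Equiv.Perm (Fin (p ^ d)) where
  toFun v := permMulEquiv p d (condAdd p d (Multiplicative.toAdd v)
    (fun i hi => absurd hi (Nat.not_le.2 i.isLt)))
  map_one' := by
    rw [show Multiplicative.toAdd (1 : Multiplicative (Fin d → ZMod p)) = 0 from rfl,
      condAdd_zero, map_one]
  map_mul' v w := by
    rw [← map_mul, condAdd_mul]
    exact congrArg _ (condAdd_congr _ _ _ (add_comm _ _))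

lemma trHom_apply [NeZero p] (v : Multiplicative (Fin d → ZMod p)) (x : Fin (p ^ d)) :
    trHom p d v x = (digEquiv p d).symm (digEquiv p d x + Multiplicative.toAdd v) := by
  show permMulEquiv p d _ x = _
  rw [permMulEquiv_apply, condAdd_apply, if_pos (fun k hk => absurd hk (Nat.not_le.2 k.isLt))]

lemma trHom_injective [NeZero p] : Function.Injective (trHom p d) := by
  intro v w h
  have h2 := congrArg (fun σ : Equiv.Perm (Fin (p ^ d)) =>
    digEquiv p d (σ ((digEquiv p d).symm 0))) h
  simp only [trHom_apply, Equiv.apply_symm_apply, zero_add] at h2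
  exact Multiplicative.toAdd.injective h2

lemma gen_eq [NeZero p] (hp : 1 < p) (hd : 1 ≤ d) (a : Fin d) :
    eGen p d ((a : ℕ) + 1) (d - ((a : ℕ) + 1))
      = trHom p d (Multiplicative.ofAdd (Pi.single a (1 : ZMod p))) := by
  rw [eGen_eq hp a.isLt (d - ((a : ℕ) + 1)) (by omega)]
  show _ = permMulEquiv p d (condAdd p d (Pi.single a (1 : ZMod p)) _)
  congr 1
  rw [condAdd_level_congr (show (a : ℕ) + 1 + (d - ((a : ℕ) + 1)) = d from by omega)
    _ _ (fun i hi => absurd hi (Nat.not_le.2 i.isLt))]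

lemma Egrp_eq [NeZero p] (hp : 1 < p) (hd : 1 ≤ d) : Egrp p d = (trHom p d).range := by
  apply le_antisymm
  · rw [Egrp]
    rw [Subgroup.closure_le]
    rintro _ ⟨j, hj, rfl⟩
    obtain ⟨hj1, hj2⟩ := hj
    have hm : j - 1 < d := by omega
    have hj' : j = ((⟨j - 1, hm⟩ : Fin d) : ℕ) + 1 := by simp; omega
    dsimp only
    rw [hj', gen_eq hp hd ⟨j - 1, hm⟩]
    exact ⟨_, rfl⟩
  · rintro a ⟨v, rfl⟩
    suffices H : ∀ (s : Finset (Fin d)) (w : Fin d → ZMod p),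
        trHom p d (Multiplicative.ofAdd (∑ i ∈ s, Pi.single i (w i))) ∈ Egrp p d by
      have h2 := H Finset.univ (Multiplicative.toAdd v)
      rw [Finset.univ_sum_single] at h2
      simpa using h2
    intro s w
    induction s using Finset.induction_on with
    | empty => simp only [Finset.sum_empty, ofAdd_zero, map_one]; exact one_mem _
    | @insert a s ha ih =>
      rw [Finset.sum_insert ha, ofAdd_add, map_mul]
      refine mul_mem ?_ ih
      have h1 : (Pi.single a (w a) : Fin d → ZMod p)
          = (w a).val • (Pi.single a (1 : ZMod p) : Fin d → ZMod p) := by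
        ext k
        by_cases hk : k = a
        · rw [hk, Pi.single_eq_same, Pi.smul_apply, Pi.single_eq_same, nsmul_eq_mul, mul_one]
          exact (ZMod.natCast_rightInverse (w a)).symm
        · rw [Pi.single_eq_of_ne hk, Pi.smul_apply, Pi.single_eq_of_ne hk, smul_zero]
      rw [h1, ofAdd_nsmul, map_pow]
      refine pow_mem ?_ _
      rw [← gen_eq hp hd a]
      exact Subgroup.subset_closure ⟨(a : ℕ) + 1, ⟨by omega, by omega⟩, rfl⟩

end EAux

theorem stmt18 {p d : ℕ} (hp : p.Prime) (hd : 1 ≤ d) :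
    (∀ a ∈ Egrp p d, ∀ b ∈ Egrp p d, a * b = b * a) ∧
    (∀ a ∈ Egrp p d, a ^ p = 1) ∧
    Nat.card (Egrp p d) = p ^ d ∧
    (∀ x y : Fin (p ^ d), ∃! g : Egrp p d, (g : Equiv.Perm (Fin (p ^ d))) x = y) := by
  haveI : NeZero p := ⟨hp.pos.ne'⟩
  have hp1 : 1 < p := hp.one_lt
  have hE := Egrp_eq (p := p) (d := d) hp1 hd
  refine ⟨?_, ?_, ?_, ?_⟩
  · intro a ha b hb
    rw [hE] at ha hb
    obtain ⟨v, rfl⟩ := ha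
    obtain ⟨w, rfl⟩ := hb
    rw [← map_mul, ← map_mul, mul_comm]
  · intro a ha
    rw [hE] at ha
    obtain ⟨v, rfl⟩ := ha
    rw [← map_pow]
    have hv : v ^ p = 1 := by
      have h2 : Multiplicative.toAdd (v ^ p)
          = Multiplicative.toAdd (1 : Multiplicative (Fin d → ZMod p)) := by
        rw [toAdd_pow]
        show p • Multiplicative.toAdd v = 0
        funext i
        rw [Pi.smul_apply, nsmul_eq_mul, ZMod.natCast_self, zero_mul]
        rfl
      exact Multiplicative.toAdd.injective h2
    rw [hv, map_one]
  · rw [hE]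
    calc Nat.card (trHom p d).range
        = Nat.card (Multiplicative (Fin d → ZMod p)) :=
          (Nat.card_congr (MonoidHom.ofInjective
            (trHom_injective (p := p) (d := d))).toEquiv).symm
      _ = Nat.card (Fin d → ZMod p) := Nat.card_congr Multiplicative.toAdd
      _ = p ^ d := by
          rw [Nat.card_eq_fintype_card, Fintype.card_fun, ZMod.card, Fintype.card_fin]
  · intro x y
    refine ⟨⟨trHom p d (Multiplicative.ofAdd (digEquiv p d y - digEquiv p d x)),
      by rw [hE]; exact ⟨_, rfl⟩⟩, ?_, ?_⟩
    · show trHom p d _ x = y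
      rw [trHom_apply]
      show (digEquiv p d).symm
        (digEquiv p d x + (digEquiv p d y - digEquiv p d x)) = y
      rw [show digEquiv p d x + (digEquiv p d y - digEquiv p d x) = digEquiv p d y
        from by abel, Equiv.symm_apply_apply]
    · rintro ⟨g, hg⟩ hgx
      have hg' := hg
      rw [hE] at hg'
      obtain ⟨v, hv⟩ := hg'
      apply Subtype.ext
      show g = trHom p d _
      rw [← hv]
      apply congrArg
      have h3 : (digEquiv p d).symm (digEquiv p d x + Multiplicative.toAdd v) = y := by
        rw [← trHom_apply, hv]
        exact hgx
      have h4 : digEquiv p d x + Multiplicative.toAdd v = digEquiv p d y := by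
        have h5 := congrArg (digEquiv p d) h3
        simpa using h5
      have h5 : Multiplicative.toAdd v = digEquiv p d y - digEquiv p d x := by
        rw [← h4]; abel
      exact Multiplicative.toAdd.injective (by simpa using h5)
end
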